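/- arXiv:math/0511257 — 5 statements merged into one kernel-verified Lean document; each statement's English description precedes it below -/
import Mathlib

section
/- Let a > 0 and let σ : ℝ → ℝ be bounded and continuous with σ not identically zero and a·‖σ‖_∞ < √2. Then the function λ : ℝ → ℝ defined by λ(s) := inf over φ ∈ C_c^∞((−a,a)) \ {0} of (∫_{−a}^a |φ'(t)|² h₀(s,t) dt)/(∫_{−a}^a |φ(t)|² h₀(s,t) dt) − E₁ is continuous, non-negative, and not identically equal to zero. -/
open MeasureTheory Real Set

lemma qpow (b t : ℝ) (m : ℕ) :
    (1 + t^2*b^2) ^ (-(m:ℝ)/4) = (((1 + t^2*b^2) ^ ((4⁻¹:ℝ)))⁻¹)^m := by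
  have h0 : (0:ℝ) < 1 + t^2*b^2 := by positivity
  rw [inv_pow, ← Real.rpow_natCast ((1 + t^2*b^2) ^ ((4⁻¹:ℝ))) m,
    ← Real.rpow_mul h0.le, ← Real.rpow_neg h0.le]
  ring_nf

lemma qsq (b t : ℝ) :
    Real.sqrt (1 + t^2*b^2) = ((1 + t^2*b^2) ^ ((4⁻¹:ℝ)))^2 := by
  have h0 : (0:ℝ) < 1 + t^2*b^2 := by positivity
  rw [Real.sqrt_eq_rpow, ← Real.rpow_natCast ((1 + t^2*b^2) ^ ((4⁻¹:ℝ))) 2,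
    ← Real.rpow_mul h0.le]
  norm_num

lemma q4 (b t : ℝ) : (((1 + t^2*b^2) ^ ((4⁻¹:ℝ))))^4 = 1 + t^2*b^2 := by
  have h0 : (0:ℝ) < 1 + t^2*b^2 := by positivity
  rw [← Real.rpow_natCast ((1 + t^2*b^2) ^ ((4⁻¹:ℝ))) 4, ← Real.rpow_mul h0.le]
  norm_num

lemma hasDerivAt_lin (k t : ℝ) : HasDerivAt (fun x : ℝ => k*x) k t := by
  simpa using (hasDerivAt_id t).const_mul k

lemma hasDerivAt_cos_lin (k t : ℝ) :
    HasDerivAt (fun t : ℝ => Real.cos (k*t)) (-(k*Real.sin (k*t))) t := by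
  have := (hasDerivAt_lin k t).cos
  convert this using 1; ring

lemma hasDerivAt_negsin_lin (k t : ℝ) :
    HasDerivAt (fun t : ℝ => -(k*Real.sin (k*t))) (-(k^2*Real.cos (k*t))) t := by
  have := ((hasDerivAt_lin k t).sin.const_mul k).neg
  exact this.congr_deriv (by ring)

lemma hasDerivAt_linb (b t : ℝ) : HasDerivAt (fun x : ℝ => x*b^2/2) (b^2/2) t := by
  simpa [mul_div_assoc] using (hasDerivAt_id t).mul_const (b^2/2)

noncomputable def qf (b t : ℝ) : ℝ := (1 + t^2*b^2) ^ ((4⁻¹:ℝ))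
noncomputable def wf (b k t : ℝ) : ℝ := Real.cos (k*t) * (qf b t)⁻¹
noncomputable def w1f (b k t : ℝ) : ℝ :=
  -(k*Real.sin (k*t)) * (qf b t)⁻¹ - Real.cos (k*t)*(t*b^2/2)*((qf b t)⁻¹)^5
noncomputable def Af (b k t : ℝ) : ℝ :=
  -(k*Real.sin (k*t)) * qf b t - Real.cos (k*t)*(t*b^2/2)*((qf b t)⁻¹)^3
noncomputable def A1f (b k t : ℝ) : ℝ :=
  -(k^2*Real.cos (k*t)) * qf b t - Real.cos (k*t)*(b^2/2)*((qf b t)⁻¹)^3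
    + Real.cos (k*t)*(3*t^2*b^4/4)*((qf b t)⁻¹)^7

lemma qf_pos (b t : ℝ) : 0 < qf b t := Real.rpow_pos_of_pos (by positivity) _

lemma hasDerivAt_q (b t : ℝ) :
    HasDerivAt (qf b) ((t*b^2/2) * ((qf b t)⁻¹)^3) t := by
  have h0 : (0:ℝ) < 1 + t^2*b^2 := by positivity
  have hu : HasDerivAt (fun t : ℝ => 1 + t^2*b^2) (2*t*b^2) t := by
    have := ((hasDerivAt_pow 2 t).mul_const (b^2)).const_add 1
    exact this.congr_deriv (by norm_num)
  have h2 := hu.rpow_const (p := (4⁻¹:ℝ)) (Or.inl h0.ne')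
  have he : (1 + t^2*b^2) ^ ((4⁻¹:ℝ) - 1) = (((1 + t^2*b^2) ^ ((4⁻¹:ℝ)))⁻¹)^3 := by
    rw [← qpow b t 3]; norm_num
  unfold qf
  convert h2 using 1
  rw [he]; ring

lemma hasDerivAt_w (b k t : ℝ) : HasDerivAt (wf b k) (w1f b k t) t := by
  have hq := hasDerivAt_q b t
  have hinv := hq.inv (qf_pos b t).ne'
  have h2 := (hasDerivAt_cos_lin k t).mul hinv
  have h0 := (qf_pos b t).ne'
  unfold wf w1f
  refine h2.congr_deriv ?_
  simp only [Pi.inv_apply]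
  field_simp
  ring

lemma hA_eq (b k t : ℝ) : (qf b t)^2 * w1f b k t = Af b k t := by
  have h0 := (qf_pos b t).ne'
  unfold w1f Af
  field_simp

lemma hasDerivAt_A (b k t : ℝ) : HasDerivAt (Af b k) (A1f b k t) t := by
  have hq := hasDerivAt_q b t
  have hinv := hq.inv (qf_pos b t).ne'
  have hinv3 := hinv.pow 3
  have hterm1 := (hasDerivAt_negsin_lin k t).mul hq
  have hmid := (hasDerivAt_cos_lin k t).mul (hasDerivAt_linb b t)
  have hterm2 := hmid.mul hinv3
  have h2 := hterm1.sub hterm2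
  have h0 := (qf_pos b t).ne'
  unfold Af A1f
  refine h2.congr_deriv ?_
  simp only [Pi.inv_apply, Pi.pow_apply, Pi.mul_apply, Nat.reduceSub]
  unfold qf at *
  generalize (1 + t^2*b^2) ^ (4⁻¹:ℝ) = X at h0 ⊢
  field_simp
  ring

lemma qsq' (b t : ℝ) : Real.sqrt (1 + t^2*b^2) = (qf b t)^2 := by
  have h0 : (0:ℝ) < 1 + t^2*b^2 := by positivity
  rw [qf, Real.sqrt_eq_rpow, ← Real.rpow_natCast ((1 + t^2*b^2) ^ ((4⁻¹:ℝ))) 2,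
    ← Real.rpow_mul h0.le]
  norm_num

lemma q4' (b t : ℝ) : (qf b t)^4 = 1 + t^2*b^2 := by
  have h0 : (0:ℝ) < 1 + t^2*b^2 := by positivity
  rw [qf, ← Real.rpow_natCast ((1 + t^2*b^2) ^ ((4⁻¹:ℝ))) 4, ← Real.rpow_mul h0.le]
  norm_num

lemma qf_contDiff (b : ℝ) : ContDiff ℝ (⊤:ℕ∞) (qf b) := by
  rw [contDiff_iff_contDiffAt]
  intro t
  have h1 : ContDiffAt ℝ (⊤:ℕ∞) (fun t : ℝ => 1 + t^2*b^2) t := by fun_prop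
  exact h1.rpow_const_of_ne (by positivity)

lemma qfinv_contDiff (b : ℝ) : ContDiff ℝ (⊤:ℕ∞) (fun t => (qf b t)⁻¹) :=
  (qf_contDiff b).inv (fun t => (qf_pos b t).ne')

lemma coslin_contDiff (k : ℝ) : ContDiff ℝ (⊤:ℕ∞) (fun t : ℝ => Real.cos (k*t)) :=
  Real.contDiff_cos.comp (contDiff_const.mul contDiff_id)

lemma sinlin_contDiff (k : ℝ) : ContDiff ℝ (⊤:ℕ∞) (fun t : ℝ => Real.sin (k*t)) :=
  Real.contDiff_sin.comp (contDiff_const.mul contDiff_id)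

lemma wf_contDiff (b k : ℝ) : ContDiff ℝ (⊤:ℕ∞) (wf b k) :=
  (coslin_contDiff k).mul (qfinv_contDiff b)

lemma w1f_contDiff (b k : ℝ) : ContDiff ℝ (⊤:ℕ∞) (w1f b k) := by
  unfold w1f
  apply ContDiff.sub
  · exact ((contDiff_const.mul (sinlin_contDiff k)).neg).mul (qfinv_contDiff b)
  · exact ((coslin_contDiff k).mul (((contDiff_id.mul contDiff_const)).div_const _)).mul
      ((qfinv_contDiff b).pow 5)

lemma Af_contDiff (b k : ℝ) : ContDiff ℝ (⊤:ℕ∞) (Af b k) := by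
  unfold Af
  apply ContDiff.sub
  · exact ((contDiff_const.mul (sinlin_contDiff k)).neg).mul (qf_contDiff b)
  · exact ((coslin_contDiff k).mul (((contDiff_id.mul contDiff_const)).div_const _)).mul
      ((qfinv_contDiff b).pow 3)

lemma A1f_contDiff (b k : ℝ) : ContDiff ℝ (⊤:ℕ∞) (A1f b k) := by
  unfold A1f
  apply ContDiff.add
  · apply ContDiff.sub
    · exact ((contDiff_const.mul (coslin_contDiff k)).neg).mul (qf_contDiff b)
    · exact ((coslin_contDiff k).mul contDiff_const).mul ((qfinv_contDiff b).pow 3)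
  · apply ContDiff.mul
    · exact (coslin_contDiff k).mul (((contDiff_const.mul (contDiff_id.pow 2)).mul contDiff_const).div_const _)
    · exact (qfinv_contDiff b).pow 7

lemma key_ptwise (a b k t : ℝ) (ha : 0 < a) (hb : a^2*b^2 ≤ 2) (ht : t ∈ Ioo (-a) a) :
    (k^2 + b^2*(2-a^2*b^2)/(4*(1+a^2*b^2)^2)) * ((qf b t)^2 * (wf b k t)^2)
      ≤ -(wf b k t * A1f b k t) := by
  have hQ := qf_pos b t
  have hQ4 := q4' b t
  have hu : (0:ℝ) < 1 + t^2*b^2 := by positivity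
  have ht2 : t^2 ≤ a^2 := by nlinarith [ht.1, ht.2]
  set c := b^2*(2-a^2*b^2)/(4*(1+a^2*b^2)^2) with hc
  have hx0 : (0:ℝ) ≤ t^2*b^2 := by positivity
  have hx : t^2*b^2 ≤ a^2*b^2 := by nlinarith [sq_nonneg b]
  have hd : 0 ≤ (a^2*b^2 - t^2*b^2) * (5 + 2*(t^2*b^2 + a^2*b^2) - t^2*b^2*(a^2*b^2)) := by
    apply mul_nonneg (by linarith)
    nlinarith [mul_le_mul_of_nonneg_left hb hx0]
  have hcu : c * (1+t^2*b^2)^2 ≤ b^2/2*(1+t^2*b^2) - 3*t^2*b^4/4 := by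
    rw [hc, div_mul_eq_mul_div, div_le_iff₀ (by positivity)]
    nlinarith [mul_nonneg (sq_nonneg b) hd]
  have expand : -(wf b k t * A1f b k t) - (k^2 + c) * ((qf b t)^2 * (wf b k t)^2)
      = (Real.cos (k*t))^2 * ((b^2/2*(1+t^2*b^2) - 3*t^2*b^4/4) - c*(1+t^2*b^2)^2)
        / (1+t^2*b^2)^2 := by
    rw [← hQ4]
    unfold wf A1f
    field_simp
    ring
  have hfinal : 0 ≤ (Real.cos (k*t))^2 * ((b^2/2*(1+t^2*b^2) - 3*t^2*b^4/4) - c*(1+t^2*b^2)^2)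
        / (1+t^2*b^2)^2 :=
    div_nonneg (mul_nonneg (sq_nonneg _) (by linarith)) (by positivity)
  linarith [expand, hfinal]

lemma contIntegrableOn {a : ℝ} {f : ℝ → ℝ} (hf : Continuous f) :
    IntegrableOn f (Set.Ioo (-a) a) :=
  hf.integrableOn_Icc.mono_set Set.Ioo_subset_Icc_self

theorem key_coercive (a b : ℝ) (ha : 0 < a) (hb : a^2*b^2 ≤ 2) (φ : ℝ → ℝ)
    (hφ : ContDiff ℝ (⊤:ℕ∞) φ) (hcs : HasCompactSupport φ)
    (hts : tsupport φ ⊆ Ioo (-a) a) :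
    (π^2/(2*a)^2 + b^2*(2-a^2*b^2)/(4*(1+a^2*b^2)^2))
        * ∫ t in Ioo (-a) a, (φ t)^2 * Real.sqrt (1 + t^2*b^2)
      ≤ ∫ t in Ioo (-a) a, (deriv φ t)^2 * Real.sqrt (1 + t^2*b^2) := by
  set k := π/(2*a) with hk
  have hkpos : 0 < k := by rw [hk]; positivity
  have hE : π^2/(2*a)^2 = k^2 := by rw [hk]; field_simp
  set c := b^2*(2-a^2*b^2)/(4*(1+a^2*b^2)^2) with hc
  -- positivity of w on Ioo
  have hw_pos : ∀ t ∈ Ioo (-a) a, 0 < wf b k t := by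
    intro t ht
    have h1 : k*t < π/2 := by
      have := (mul_lt_mul_iff_right₀ hkpos).2 ht.2
      rw [hk] at this ⊢
      calc π/(2*a)*t < π/(2*a)*a := this
      _ = π/2 := by field_simp
    have h2 : -(π/2) < k*t := by
      have := (mul_lt_mul_iff_right₀ hkpos).2 ht.1
      rw [hk] at this ⊢
      calc -(π/2) = π/(2*a)*(-a) := by field_simp
      _ < π/(2*a)*t := this
    have hcos : 0 < Real.cos (k*t) := Real.cos_pos_of_mem_Ioo ⟨h2, h1⟩
    exact mul_pos hcos (inv_pos.2 (qf_pos b t))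
  -- eta
  set η : ℝ → ℝ := fun t => φ t / wf b k t with hηdef
  have hwzero : ∀ t, wf b k t = 0 → φ t = 0 := by
    intro t h
    by_contra hne
    have h1 : t ∈ tsupport φ := subset_closure (by simpa [Function.mem_support] using hne)
    exact (hw_pos t (hts h1)).ne' h
  have hφ_eq : ∀ t, φ t = wf b k t * η t := by
    intro t
    by_cases h : wf b k t = 0
    · rw [hηdef]; simp [h, hwzero t h]
    · rw [hηdef]; field_simp
  have hη_cd : ContDiff ℝ (⊤:ℕ∞) η := by
    rw [contDiff_iff_contDiffAt]
    intro t
    by_cases h : wf b k t = 0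
    · have hnt : t ∉ tsupport φ := by
        intro hmem
        exact (hw_pos t (hts hmem)).ne' h
      have hev : φ =ᶠ[nhds t] 0 := notMem_tsupport_iff_eventuallyEq.mp hnt
      have hev2 : η =ᶠ[nhds t] 0 := by
        filter_upwards [hev] with x hx
        rw [hηdef]; simp [hx]
      exact (contDiffAt_const (c := (0:ℝ))).congr_of_eventuallyEq hev2
    · exact (hφ.contDiffAt).div ((wf_contDiff b k).contDiffAt) h
  have hη_supp : Function.support η ⊆ Function.support φ := by
    intro t ht
    simp only [Function.mem_support] at ht ⊢
    intro h
    exact ht (by simp [hηdef, h])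
  have hη_cs : HasCompactSupport η := hcs.mono hη_supp
  have hηd : ∀ t, HasDerivAt η (deriv η t) t :=
    fun t => (hη_cd.differentiable (by simp) t).hasDerivAt
  have hderivφ : ∀ t, deriv φ t = w1f b k t * η t + wf b k t * deriv η t := by
    intro t
    have h1 := (hasDerivAt_w b k t).mul (hηd t)
    have h2 : φ = fun t => wf b k t * η t := funext hφ_eq
    rw [h2]
    exact h1.deriv
  -- F and its derivative
  set F : ℝ → ℝ := fun t => (wf b k t * Af b k t) * (η t)^2 with hFdef
  have hF_deriv : ∀ t, HasDerivAt F
      ((w1f b k t * Af b k t + wf b k t * A1f b k t) * (η t)^2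
        + (wf b k t * Af b k t) * (2 * η t * deriv η t)) t := by
    intro t
    have h1 := ((hasDerivAt_w b k t).mul (hasDerivAt_A b k t)).mul ((hηd t).pow 2)
    refine h1.congr_deriv ?_
    simp only [Pi.pow_apply, Pi.mul_apply]
    push_cast
    ring
  -- master pointwise identity
  have master : ∀ t, (deriv φ t)^2 * Real.sqrt (1 + t^2*b^2)
      = deriv F t + (-(wf b k t * A1f b k t)) * (η t)^2
        + ((qf b t)^2*(wf b k t)^2) * (deriv η t)^2 := by
    intro t
    rw [(hF_deriv t).deriv, hderivφ t, qsq' b t, ← hA_eq b k t]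
    ring
  -- continuity facts
  have hηc : Continuous η := hη_cd.continuous
  have hdηc : Continuous (deriv η) := hη_cd.continuous_deriv (by exact_mod_cast le_top)
  have hdφc : Continuous (deriv φ) := hφ.continuous_deriv (by exact_mod_cast le_top)
  have hsqrtc : Continuous (fun t : ℝ => Real.sqrt (1 + t^2*b^2)) := by fun_prop
  have hX_c : Continuous (fun t => (-(wf b k t * A1f b k t)) * (η t)^2) :=
    (((wf_contDiff b k).continuous.mul (A1f_contDiff b k).continuous).neg).mul (hηc.pow 2)
  have hY_c : Continuous (fun t => ((qf b t)^2*(wf b k t)^2) * (deriv η t)^2) :=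
    (((qf_contDiff b).continuous.pow 2).mul ((wf_contDiff b k).continuous.pow 2)).mul (hdηc.pow 2)
  have hdF_c : Continuous (deriv F) := by
    have : deriv F = fun t => (w1f b k t * Af b k t + wf b k t * A1f b k t) * (η t)^2
        + (wf b k t * Af b k t) * (2 * η t * deriv η t) := funext fun t => (hF_deriv t).deriv
    rw [this]
    have c1 := (w1f_contDiff b k).continuous
    have c2 := (Af_contDiff b k).continuous
    have c3 := (wf_contDiff b k).continuous
    have c4 := (A1f_contDiff b k).continuous
    fun_prop
  -- integral of deriv F vanishes
  have hF_supp : Function.support F ⊆ Function.support η := by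
    intro t ht
    simp only [Function.mem_support] at ht ⊢
    intro h
    exact ht (by simp [hFdef, h])
  have hF_cs : HasCompactSupport F := hη_cs.mono hF_supp
  have hF_ts : tsupport F ⊆ Ioo (-a) a := by
    refine subset_trans (closure_mono hF_supp) ?_
    refine subset_trans (closure_mono hη_supp) ?_
    exact hts
  have hFc1 : ContDiff ℝ 1 F :=
    (((wf_contDiff b k).mul (Af_contDiff b k)).mul (hη_cd.pow 2)).of_le (by exact_mod_cast le_top)
  have hintF : ∫ t in Ioo (-a) a, deriv F t = 0 := by
    have h1 : ∫ t in Iic a, deriv F t = F a :=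
      HasCompactSupport.integral_Iic_deriv_eq hFc1 hF_cs a
    have h2 : ∫ t in Iic a, deriv F t = ∫ t in Ioo (-a) a, deriv F t := by
      apply setIntegral_eq_of_subset_of_forall_diff_eq_zero measurableSet_Iic
        (fun x hx => le_of_lt hx.2)
      intro x hx
      have hnt : x ∉ tsupport F := fun hmem => hx.2 (hF_ts hmem)
      by_contra hne
      have hmem : x ∈ Function.support (deriv F) := hne
      exact hnt (support_deriv_subset hmem)
    have hFa : F a = 0 := by
      apply image_eq_zero_of_notMem_tsupport
      intro hmem
      exact absurd (hF_ts hmem).2 (lt_irrefl a)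
    rw [← h2, h1, hFa]
  -- split the integral
  have hstep : ∫ t in Ioo (-a) a, (deriv φ t)^2 * Real.sqrt (1 + t^2*b^2)
      = (∫ t in Ioo (-a) a, deriv F t)
        + (∫ t in Ioo (-a) a, (-(wf b k t * A1f b k t)) * (η t)^2)
        + ∫ t in Ioo (-a) a, ((qf b t)^2*(wf b k t)^2) * (deriv η t)^2 := by
    have e1 : ∀ t ∈ Ioo (-a) a, (deriv φ t)^2 * Real.sqrt (1 + t^2*b^2)
        = deriv F t + (-(wf b k t * A1f b k t)) * (η t)^2
          + ((qf b t)^2*(wf b k t)^2) * (deriv η t)^2 := fun t _ => master t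
    rw [setIntegral_congr_fun measurableSet_Ioo e1]
    rw [integral_add (f := fun t => deriv F t + (-(wf b k t * A1f b k t)) * (η t)^2) (contIntegrableOn (hdF_c.add hX_c)) (contIntegrableOn hY_c),
      integral_add (contIntegrableOn hdF_c) (contIntegrableOn hX_c)]
  -- pointwise bound
  have hpt : ∀ t ∈ Ioo (-a) a, (k^2+c) * ((φ t)^2 * Real.sqrt (1 + t^2*b^2))
      ≤ (-(wf b k t * A1f b k t)) * (η t)^2 := by
    intro t ht
    have h1 := key_ptwise a b k t ha hb ht
    rw [← hc] at h1
    calc (k^2+c) * ((φ t)^2 * Real.sqrt (1 + t^2*b^2))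
        = ((k^2+c) * ((qf b t)^2 * (wf b k t)^2)) * (η t)^2 := by
          rw [hφ_eq t, qsq' b t]; ring
      _ ≤ (-(wf b k t * A1f b k t)) * (η t)^2 :=
          mul_le_mul_of_nonneg_right h1 (sq_nonneg _)
  have hint1 : ∫ t in Ioo (-a) a, (k^2+c) * ((φ t)^2 * Real.sqrt (1 + t^2*b^2))
      ≤ ∫ t in Ioo (-a) a, (-(wf b k t * A1f b k t)) * (η t)^2 := by
    apply setIntegral_mono_on
      (Integrable.const_mul (contIntegrableOn ((hφ.continuous.pow 2).mul hsqrtc)) _)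
      (contIntegrableOn hX_c) measurableSet_Ioo hpt
  have hint2 : 0 ≤ ∫ t in Ioo (-a) a, ((qf b t)^2*(wf b k t)^2) * (deriv η t)^2 := by
    apply setIntegral_nonneg measurableSet_Ioo
    intro t _
    positivity
  rw [hE]
  calc (k^2+c) * ∫ t in Ioo (-a) a, (φ t)^2 * Real.sqrt (1 + t^2*b^2)
      = ∫ t in Ioo (-a) a, (k^2+c) * ((φ t)^2 * Real.sqrt (1 + t^2*b^2)) := by
        rw [MeasureTheory.integral_const_mul]
    _ ≤ ∫ t in Ioo (-a) a, (-(wf b k t * A1f b k t)) * (η t)^2 := hint1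
    _ ≤ (∫ t in Ioo (-a) a, deriv F t)
        + (∫ t in Ioo (-a) a, (-(wf b k t * A1f b k t)) * (η t)^2)
        + ∫ t in Ioo (-a) a, ((qf b t)^2*(wf b k t)^2) * (deriv η t)^2 := by
        rw [hintF]; linarith
    _ = ∫ t in Ioo (-a) a, (deriv φ t)^2 * Real.sqrt (1 + t^2*b^2) := hstep.symm

lemma contIntegrableOn' {a : ℝ} {f : ℝ → ℝ} (hf : Continuous f) :
    IntegrableOn f (Set.Ioo (-a) a) :=
  hf.integrableOn_Icc.mono_set Set.Ioo_subset_Icc_self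

lemma sqrt_weight_cont (b : ℝ) : Continuous (fun t : ℝ => Real.sqrt (1 + t^2*b^2)) := by
  fun_prop

lemma one_le_sqrt_weight (b t : ℝ) : 1 ≤ Real.sqrt (1 + t^2*b^2) := by
  have h := Real.sqrt_le_sqrt (show (1:ℝ) ≤ 1 + t^2*b^2 by nlinarith [sq_nonneg (t*b)])
  rwa [Real.sqrt_one] at h

lemma denom_pos (a b : ℝ) (ha : 0 < a) (φ : ℝ → ℝ) (hφc : Continuous φ)
    (hts : tsupport φ ⊆ Ioo (-a) a) (hne : φ ≠ 0) :
    0 < ∫ t in Ioo (-a) a, (φ t)^2 * Real.sqrt (1 + t^2*b^2) := by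
  have hint : IntegrableOn (fun t => (φ t)^2 * Real.sqrt (1 + t^2*b^2)) (Ioo (-a) a) :=
    contIntegrableOn' ((hφc.pow 2).mul (sqrt_weight_cont b))
  rw [setIntegral_pos_iff_support_of_nonneg_ae
    (Filter.Eventually.of_forall (fun t => by positivity)) hint]
  obtain ⟨t₀, ht₀⟩ : ∃ t, φ t ≠ 0 := by
    by_contra h; push_neg at h; exact hne (funext h)
  have ht0mem : t₀ ∈ Ioo (-a) a := hts (subset_closure ht₀)
  have hUsub : Function.support φ ∩ Ioo (-a) a
      ⊆ Function.support (fun t => (φ t)^2 * Real.sqrt (1 + t^2*b^2)) ∩ Ioo (-a) a := by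
    rintro t ⟨h1, h2⟩
    refine ⟨?_, h2⟩
    have hw : (0:ℝ) < Real.sqrt (1 + t^2*b^2) := lt_of_lt_of_le one_pos (one_le_sqrt_weight b t)
    simp only [Function.mem_support] at h1 ⊢
    exact mul_ne_zero (pow_ne_zero 2 h1) hw.ne'
  have hUopen : IsOpen (Function.support φ ∩ Ioo (-a) a) :=
    (hφc.isOpen_support).inter isOpen_Ioo
  have hUne : (Function.support φ ∩ Ioo (-a) a).Nonempty := ⟨t₀, ht₀, ht0mem⟩
  exact lt_of_lt_of_le (hUopen.measure_pos volume hUne) (measure_mono hUsub)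

lemma sqrt_weight_comp (a u v t : ℝ) (hu : 0 ≤ u) (hv : 0 ≤ v) (ht2 : t^2 ≤ a^2) :
    Real.sqrt (1 + t^2*u) ≤ (1 + a^2*|u-v|/2) * Real.sqrt (1 + t^2*v) := by
  have h1u : (0:ℝ) ≤ 1 + t^2*u := by positivity
  have h1v : (0:ℝ) ≤ 1 + t^2*v := by positivity
  set s1 := Real.sqrt (1 + t^2*u) with hs1
  set s2 := Real.sqrt (1 + t^2*v) with hs2
  have e1 : s1^2 = 1 + t^2*u := Real.sq_sqrt h1u
  have e2 : s2^2 = 1 + t^2*v := Real.sq_sqrt h1v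
  have h11 : 1 ≤ s1 := by
    have h := Real.sqrt_le_sqrt (show (1:ℝ) ≤ 1 + t^2*u by nlinarith)
    rwa [Real.sqrt_one] at h
  have h12 : 1 ≤ s2 := by
    have h := Real.sqrt_le_sqrt (show (1:ℝ) ≤ 1 + t^2*v by nlinarith)
    rwa [Real.sqrt_one] at h
  have habs : t^2*(u-v) ≤ a^2*|u-v| :=
    le_trans (mul_le_mul_of_nonneg_left (le_abs_self _) (sq_nonneg t))
      (mul_le_mul_of_nonneg_right ht2 (abs_nonneg _))
  have hd0 : 0 ≤ a^2*|u-v|/2 := by positivity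
  have step1 : s1 ≤ s2 + a^2*|u-v|/2 := by
    nlinarith [e1, e2, h11, h12, habs, sq_nonneg (s1-s2), sq_nonneg (s1+s2)]
  have step2 : s2 + a^2*|u-v|/2 ≤ (1 + a^2*|u-v|/2)*s2 := by
    nlinarith [mul_le_mul_of_nonneg_left h12 hd0]
  linarith
set_option maxHeartbeats 2000000 in
/-- **Lemma.** The lowest-transverse-eigenvalue shift
`λ(s) = inf_{φ ∈ C_c^∞((-a,a)) \ {0}} (∫ |φ'|² h₀(s,·)) / (∫ |φ|² h₀(s,·)) - E₁`
is continuous, non-negative, and not identically zero, provided `σ` is bounded,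
continuous, not identically zero and `a ‖σ‖_∞ < √2`. -/
theorem lambda_continuous_nonneg_not_zero
    (a : ℝ) (ha : 0 < a)
    (σ : ℝ → ℝ) (hσcont : Continuous σ) (hσbdd : ∃ M, ∀ s, |σ s| ≤ M)
    (hσne : ∃ s, σ s ≠ 0)
    (hthin : a * (⨆ s, |σ s|) < Real.sqrt 2)
    (lam : ℝ → ℝ)
    (hlam : ∀ s, lam s =
      sInf {r : ℝ | ∃ φ : ℝ → ℝ, ContDiff ℝ (⊤ : ℕ∞) φ ∧ HasCompactSupport φ ∧
        tsupport φ ⊆ Ioo (-a) a ∧ φ ≠ 0 ∧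
        r = (∫ t in Ioo (-a) a, (deriv φ t) ^ 2 * Real.sqrt (1 + t ^ 2 * σ s ^ 2)) /
            (∫ t in Ioo (-a) a, (φ t) ^ 2 * Real.sqrt (1 + t ^ 2 * σ s ^ 2))}
      - π ^ 2 / (2 * a) ^ 2) :
    Continuous lam ∧ (∀ s, 0 ≤ lam s) ∧ (∃ s, lam s ≠ 0) := by
  -- the sup of |σ|
  obtain ⟨M₀, hM₀⟩ := hσbdd
  have hBdd : BddAbove (Set.range fun s => |σ s|) := ⟨M₀, by rintro _ ⟨s, rfl⟩; exact hM₀ s⟩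
  set M := ⨆ s, |σ s| with hM
  have hMle : ∀ s, |σ s| ≤ M := fun s => le_ciSup hBdd s
  have hM0 : 0 ≤ M := le_trans (abs_nonneg _) (hMle 0)
  have hM2 : (a*M)^2 < 2 := by
    have h2 : Real.sqrt 2 ^ 2 = 2 := Real.sq_sqrt (by norm_num)
    nlinarith [hthin, mul_nonneg ha.le hM0, Real.sqrt_nonneg 2]
  have hb2 : ∀ s, a^2 * σ s ^ 2 < 2 := by
    intro s
    nlinarith [mul_le_mul (hMle s) (hMle s) (abs_nonneg (σ s)) hM0, sq_abs (σ s),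
      sq_nonneg a, hM2, sq_nonneg (a*M)]
  -- the family of Rayleigh sets
  set SS : ℝ → Set ℝ := fun s =>
    {r : ℝ | ∃ φ : ℝ → ℝ, ContDiff ℝ (⊤ : ℕ∞) φ ∧ HasCompactSupport φ ∧
      tsupport φ ⊆ Ioo (-a) a ∧ φ ≠ 0 ∧
      r = (∫ t in Ioo (-a) a, (deriv φ t) ^ 2 * Real.sqrt (1 + t ^ 2 * σ s ^ 2)) /
          (∫ t in Ioo (-a) a, (φ t) ^ 2 * Real.sqrt (1 + t ^ 2 * σ s ^ 2))} with hSS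
  have hlam' : ∀ s, lam s = sInf (SS s) - π ^ 2 / (2 * a) ^ 2 := hlam
  -- the constant shift
  set cst : ℝ → ℝ := fun s => σ s ^ 2 * (2 - a^2 * σ s ^ 2) / (4*(1 + a^2 * σ s ^ 2)^2)
    with hcst
  have hcst0 : ∀ s, 0 ≤ cst s := by
    intro s
    exact div_nonneg (mul_nonneg (sq_nonneg _) (by linarith [hb2 s])) (by positivity)
  -- lower bound on elements of SS s
  have hlow : ∀ s, ∀ r ∈ SS s, π ^ 2 / (2 * a) ^ 2 + cst s ≤ r := by
    intro s r hr
    simp only [hSS, mem_setOf_eq] at hr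
    obtain ⟨φ, p1, p2, p3, p4, rfl⟩ := hr
    have hD := denom_pos a (σ s) ha φ p1.continuous p3 p4
    rw [le_div_iff₀ hD]
    exact key_coercive a (σ s) ha (hb2 s).le φ p1 p2 p3
  -- bump function
  set B : ContDiffBump (0:ℝ) := ⟨a/2, 3*a/4, by positivity, by linarith⟩ with hB
  have hB3 : tsupport ⇑B ⊆ Ioo (-a) a := by
    rw [B.tsupport_eq]
    intro x hx
    rw [Real.closedBall_eq_Icc] at hx
    have h1 : B.rOut = 3*a/4 := rfl
    rw [h1] at hx
    constructor
    · have := hx.1; linarith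
    · have := hx.2; linarith
  have hB4 : ⇑B ≠ 0 := by
    intro h
    have h1 : (⇑B) 0 = 1 :=
      B.one_of_mem_closedBall (Metric.mem_closedBall_self (le_of_lt B.rIn_pos))
    rw [h] at h1
    simpa using h1
  have hS_ne : ∀ s, (SS s).Nonempty := by
    intro s
    exact ⟨_, by simp only [hSS, mem_setOf_eq]; exact ⟨⇑B, B.contDiff, B.hasCompactSupport, hB3, hB4, rfl⟩⟩
  have hS_bdd : ∀ s, BddBelow (SS s) :=
    fun s => ⟨π ^ 2 / (2 * a) ^ 2 + cst s, fun r hr => hlow s r hr⟩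
  have hInf_lb : ∀ s, π ^ 2 / (2 * a) ^ 2 + cst s ≤ sInf (SS s) :=
    fun s => le_csInf (hS_ne s) (hlow s)
  have hE1pos : (0:ℝ) < π ^ 2 / (2 * a) ^ 2 := by positivity
  have hI0 : ∀ s, 0 ≤ sInf (SS s) := fun s => by
    have := hInf_lb s; have := hcst0 s; linarith
  -- uniform upper bound Bd
  set C := Real.sqrt (1 + a^2*M^2) with hC
  have hC1 : 1 ≤ C := by
    rw [hC]
    have h := Real.sqrt_le_sqrt (show (1:ℝ) ≤ 1 + a^2*M^2 by nlinarith [sq_nonneg (a*M)])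
    rwa [Real.sqrt_one] at h
  set N0 := ∫ t in Ioo (-a) a, (deriv (⇑B) t) ^ 2 * Real.sqrt (1 + t ^ 2 * (0:ℝ)^2) with hN0
  set D0 := ∫ t in Ioo (-a) a, ((⇑B) t) ^ 2 * Real.sqrt (1 + t ^ 2 * (0:ℝ)^2) with hD0
  have hD0pos : 0 < D0 := denom_pos a 0 ha ⇑B (B.contDiff (n := (⊤:ℕ∞))).continuous hB3 hB4
  have hN0nn : 0 ≤ N0 := setIntegral_nonneg measurableSet_Ioo (fun t _ => by positivity)
  set Bd := C * N0 / D0 with hBd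
  have hBd0 : 0 ≤ Bd := div_nonneg (mul_nonneg (by linarith) hN0nn) hD0pos.le
  have hdBc : Continuous (deriv ⇑B) := (B.contDiff (n := (⊤:ℕ∞))).continuous_deriv (by exact_mod_cast le_top)
  have hIB : ∀ s, sInf (SS s) ≤ Bd := by
    intro s
    have hmem : (∫ t in Ioo (-a) a, (deriv (⇑B) t) ^ 2 * Real.sqrt (1 + t ^ 2 * σ s ^ 2)) /
        (∫ t in Ioo (-a) a, ((⇑B) t) ^ 2 * Real.sqrt (1 + t ^ 2 * σ s ^ 2)) ∈ SS s := by
      simp only [hSS, mem_setOf_eq]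
      exact ⟨⇑B, B.contDiff, B.hasCompactSupport, hB3, hB4, rfl⟩
    refine le_trans (csInf_le (hS_bdd s) hmem) ?_
    have hDb := denom_pos a (σ s) ha ⇑B (B.contDiff (n := (⊤:ℕ∞))).continuous hB3 hB4
    have hwle : ∀ t ∈ Ioo (-a) a,
        Real.sqrt (1 + t ^ 2 * σ s ^ 2) ≤ C * Real.sqrt (1 + t ^ 2 * (0:ℝ)^2) := by
      intro t ht
      have ht2 : t^2 ≤ a^2 := by nlinarith [ht.1, ht.2]
      have h1 : Real.sqrt (1 + t ^ 2 * σ s ^ 2) ≤ C := by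
        rw [hC]
        apply Real.sqrt_le_sqrt
        nlinarith [mul_le_mul (hMle s) (hMle s) (abs_nonneg (σ s)) hM0, sq_abs (σ s),
          sq_nonneg t, sq_nonneg M]
      have h2 : Real.sqrt (1 + t ^ 2 * (0:ℝ)^2) = 1 := by norm_num
      rw [h2, mul_one]
      exact h1
    have hNle : (∫ t in Ioo (-a) a, (deriv (⇑B) t) ^ 2 * Real.sqrt (1 + t ^ 2 * σ s ^ 2))
        ≤ C * N0 := by
      rw [hN0, ← MeasureTheory.integral_const_mul]
      apply setIntegral_mono_on
        (contIntegrableOn' ((hdBc.pow 2).mul (by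
          have := sqrt_weight_cont (σ s)
          fun_prop)))
        (contIntegrableOn' (by
          have h1 := sqrt_weight_cont (0:ℝ)
          fun_prop))
        measurableSet_Ioo
      intro t ht
      calc (deriv (⇑B) t) ^ 2 * Real.sqrt (1 + t ^ 2 * σ s ^ 2)
          ≤ (deriv (⇑B) t) ^ 2 * (C * Real.sqrt (1 + t ^ 2 * (0:ℝ)^2)) :=
            mul_le_mul_of_nonneg_left (hwle t ht) (sq_nonneg _)
        _ = C * ((deriv (⇑B) t) ^ 2 * Real.sqrt (1 + t ^ 2 * (0:ℝ)^2)) := by ring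
    have hDge : D0 ≤ ∫ t in Ioo (-a) a, ((⇑B) t) ^ 2 * Real.sqrt (1 + t ^ 2 * σ s ^ 2) := by
      rw [hD0]
      apply setIntegral_mono_on
        (contIntegrableOn' (by
          have h1 := sqrt_weight_cont (0:ℝ)
          have h2 := (B.contDiff (n := (⊤:ℕ∞))).continuous
          fun_prop))
        (contIntegrableOn' (by
          have h1 := sqrt_weight_cont (σ s)
          have h2 := (B.contDiff (n := (⊤:ℕ∞))).continuous
          fun_prop))
        measurableSet_Ioo
      intro t ht
      apply mul_le_mul_of_nonneg_left _ (sq_nonneg _)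
      apply Real.sqrt_le_sqrt
      nlinarith [sq_nonneg (t * σ s), sq_nonneg t]
    exact div_le_div₀ (mul_nonneg (by linarith) hN0nn) hNle hD0pos hDge
  -- comparison between different s
  have hcomp : ∀ s s' : ℝ,
      sInf (SS s) ≤ (1 + a^2*|σ s ^ 2 - σ s' ^ 2|/2)^2 * sInf (SS s') := by
    intro s s'
    set δ := a^2*|σ s ^ 2 - σ s' ^ 2|/2 with hδ
    have hδ0 : 0 ≤ δ := by positivity
    have hquot : ∀ r ∈ SS s', sInf (SS s) ≤ (1+δ)^2 * r := by
      intro r hr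
      simp only [hSS, mem_setOf_eq] at hr
      obtain ⟨φ, p1, p2, p3, p4, rfl⟩ := hr
      have hφc := p1.continuous
      have hdφc : Continuous (deriv φ) := p1.continuous_deriv (by exact_mod_cast le_top)
      have hDs := denom_pos a (σ s) ha φ hφc p3 p4
      have hDs' := denom_pos a (σ s') ha φ hφc p3 p4
      have hNs' : 0 ≤ ∫ t in Ioo (-a) a, (deriv φ t) ^ 2 * Real.sqrt (1 + t ^ 2 * σ s' ^ 2) :=
        setIntegral_nonneg measurableSet_Ioo (fun t _ => by positivity)
      have hN : (∫ t in Ioo (-a) a, (deriv φ t) ^ 2 * Real.sqrt (1 + t ^ 2 * σ s ^ 2))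
          ≤ (1+δ) * ∫ t in Ioo (-a) a, (deriv φ t) ^ 2 * Real.sqrt (1 + t ^ 2 * σ s' ^ 2) := by
        rw [← MeasureTheory.integral_const_mul]
        apply setIntegral_mono_on
          (contIntegrableOn' (by
            have h1 := sqrt_weight_cont (σ s)
            fun_prop))
          (contIntegrableOn' (by
            have h1 := sqrt_weight_cont (σ s')
            fun_prop))
          measurableSet_Ioo
        intro t ht
        have ht2 : t^2 ≤ a^2 := by nlinarith [ht.1, ht.2]
        have h3 := sqrt_weight_comp a (σ s ^ 2) (σ s' ^ 2) t (sq_nonneg _) (sq_nonneg _) ht2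
        calc (deriv φ t) ^ 2 * Real.sqrt (1 + t ^ 2 * σ s ^ 2)
            ≤ (deriv φ t) ^ 2 * ((1+δ) * Real.sqrt (1 + t ^ 2 * σ s' ^ 2)) :=
              mul_le_mul_of_nonneg_left h3 (sq_nonneg _)
          _ = (1+δ) * ((deriv φ t) ^ 2 * Real.sqrt (1 + t ^ 2 * σ s' ^ 2)) := by ring
      have hD : (∫ t in Ioo (-a) a, (φ t) ^ 2 * Real.sqrt (1 + t ^ 2 * σ s' ^ 2))
          ≤ (1+δ) * ∫ t in Ioo (-a) a, (φ t) ^ 2 * Real.sqrt (1 + t ^ 2 * σ s ^ 2) := by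
        rw [← MeasureTheory.integral_const_mul]
        apply setIntegral_mono_on
          (contIntegrableOn' (by
            have h1 := sqrt_weight_cont (σ s')
            fun_prop))
          (contIntegrableOn' (by
            have h1 := sqrt_weight_cont (σ s)
            fun_prop))
          measurableSet_Ioo
        intro t ht
        have ht2 : t^2 ≤ a^2 := by nlinarith [ht.1, ht.2]
        have h3 := sqrt_weight_comp a (σ s' ^ 2) (σ s ^ 2) t (sq_nonneg _) (sq_nonneg _) ht2
        rw [abs_sub_comm] at h3
        calc (φ t) ^ 2 * Real.sqrt (1 + t ^ 2 * σ s' ^ 2)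
            ≤ (φ t) ^ 2 * ((1+δ) * Real.sqrt (1 + t ^ 2 * σ s ^ 2)) :=
              mul_le_mul_of_nonneg_left h3 (sq_nonneg _)
          _ = (1+δ) * ((φ t) ^ 2 * Real.sqrt (1 + t ^ 2 * σ s ^ 2)) := by ring
      have hmemS : (∫ t in Ioo (-a) a, (deriv φ t) ^ 2 * Real.sqrt (1 + t ^ 2 * σ s ^ 2)) /
          (∫ t in Ioo (-a) a, (φ t) ^ 2 * Real.sqrt (1 + t ^ 2 * σ s ^ 2)) ∈ SS s := by
        simp only [hSS, mem_setOf_eq]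
        exact ⟨φ, p1, p2, p3, p4, rfl⟩
      have h5 := csInf_le (hS_bdd s) hmemS
      set Ns := ∫ t in Ioo (-a) a, (deriv φ t) ^ 2 * Real.sqrt (1 + t ^ 2 * σ s ^ 2)
      set Ds := ∫ t in Ioo (-a) a, (φ t) ^ 2 * Real.sqrt (1 + t ^ 2 * σ s ^ 2)
      set Ns' := ∫ t in Ioo (-a) a, (deriv φ t) ^ 2 * Real.sqrt (1 + t ^ 2 * σ s' ^ 2)
      set Ds' := ∫ t in Ioo (-a) a, (φ t) ^ 2 * Real.sqrt (1 + t ^ 2 * σ s' ^ 2)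
      have hρ0 : 0 ≤ Ns'/Ds' := div_nonneg hNs' hDs'.le
      have e : Ns' = Ns'/Ds' * Ds' := (div_mul_cancel₀ _ hDs'.ne').symm
      have h6 : Ns/Ds ≤ (1+δ)^2 * (Ns'/Ds') := by
        rw [div_le_iff₀ hDs]
        calc Ns ≤ (1+δ)*Ns' := hN
          _ = (1+δ)*(Ns'/Ds')*Ds' := by rw [mul_assoc, ← e]
          _ ≤ (1+δ)*(Ns'/Ds')*((1+δ)*Ds) := by
              apply mul_le_mul_of_nonneg_left hD (by positivity)
          _ = (1+δ)^2*(Ns'/Ds')*Ds := by ring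
      linarith [h5, h6]
    have h7 : sInf (SS s)/(1+δ)^2 ≤ sInf (SS s') := by
      apply le_csInf (hS_ne s')
      intro r hr
      rw [div_le_iff₀ (by positivity)]
      calc sInf (SS s) ≤ (1+δ)^2*r := hquot r hr
        _ = r*(1+δ)^2 := by ring
    calc sInf (SS s) = sInf (SS s)/(1+δ)^2 * (1+δ)^2 := by field_simp
      _ ≤ sInf (SS s')*(1+δ)^2 := mul_le_mul_of_nonneg_right h7 (by positivity)
      _ = (1+δ)^2*sInf (SS s') := by ring
  -- difference bound
  have hdiff : ∀ s s' : ℝ, |sInf (SS s) - sInf (SS s')|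
      ≤ (2*(a^2*|σ s ^ 2 - σ s' ^ 2|/2) + (a^2*|σ s ^ 2 - σ s' ^ 2|/2)^2) * Bd := by
    intro s s'
    have hδ0 : 0 ≤ a^2*|σ s ^ 2 - σ s' ^ 2|/2 := by positivity
    have hδfac : 0 ≤ 2*(a^2*|σ s ^ 2 - σ s' ^ 2|/2) + (a^2*|σ s ^ 2 - σ s' ^ 2|/2)^2 := by
      positivity
    rw [abs_sub_le_iff]
    constructor
    · have h1 := hcomp s s'
      have h2 := hIB s'
      have h3 := hI0 s'
      nlinarith [mul_nonneg hδfac (sub_nonneg.2 h2)]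
    · have h1 := hcomp s' s
      rw [abs_sub_comm] at h1
      have h2 := hIB s
      have h3 := hI0 s
      nlinarith [mul_nonneg hδfac (sub_nonneg.2 h2)]
  refine ⟨?_, ?_, ?_⟩
  · -- continuity
    rw [continuous_iff_continuousAt]
    intro s₀
    rw [ContinuousAt, tendsto_iff_dist_tendsto_zero]
    have hbound : ∀ s, dist (lam s) (lam s₀)
        ≤ (2*(a^2*|σ s ^ 2 - σ s₀ ^ 2|/2) + (a^2*|σ s ^ 2 - σ s₀ ^ 2|/2)^2) * Bd := by
      intro s
      rw [Real.dist_eq, show lam s - lam s₀ = sInf (SS s) - sInf (SS s₀) by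
        rw [hlam' s, hlam' s₀]; ring]
      exact hdiff s s₀
    have htend : Filter.Tendsto
        (fun s => (2*(a^2*|σ s ^ 2 - σ s₀ ^ 2|/2) + (a^2*|σ s ^ 2 - σ s₀ ^ 2|/2)^2) * Bd)
        (nhds s₀) (nhds 0) := by
      have hcontb : Continuous
          (fun s => (2*(a^2*|σ s ^ 2 - σ s₀ ^ 2|/2) + (a^2*|σ s ^ 2 - σ s₀ ^ 2|/2)^2) * Bd) := by
        fun_prop
      exact hcontb.tendsto' s₀ 0 (by simp)
    exact squeeze_zero (fun s => dist_nonneg) hbound htend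
  · -- nonnegativity
    intro s
    rw [hlam' s]
    have h1 := hInf_lb s
    have h2 := hcst0 s
    linarith
  · -- not identically zero
    obtain ⟨s₀, hs₀⟩ := hσne
    refine ⟨s₀, ?_⟩
    have hpos : 0 < cst s₀ := by
      have h1 : 0 < |σ s₀| := abs_pos.mpr hs₀
      have h2 : 0 < σ s₀ ^ 2 := by nlinarith [sq_abs (σ s₀)]
      exact div_pos (mul_pos h2 (by linarith [hb2 s₀])) (by positivity)
    have h3 := hInf_lb s₀
    have : 0 < lam s₀ := by rw [hlam' s₀]; linarith
    exact this.ne'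
end

section
/- Let a > 0 and let σ : ℝ → ℝ be bounded and continuous. For every fixed s ∈ ℝ, the infimum λ(s) := inf over φ ∈ C_c^∞((−a,a)) \ {0} of (∫_{−a}^a |φ'(t)|² h₀(s,t) dt)/(∫_{−a}^a |φ(t)|² h₀(s,t) dt) − E₁ equals the infimum over φ ∈ C_c^∞((−a,a)) \ {0} of (∫_{−a}^a (|φ'(t)|² − E₁|φ(t)|² + V(s,t)|φ(t)|²) dt)/(∫_{−a}^a |φ(t)|² dt), where V(s,t) := σ(s)²·(2 − t² σ(s)²)/(4 h₀(s,t)⁴). (The two infima are related by the substitution φ ↦ √(h₀(s,·))·φ and integration by parts.) -/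
open MeasureTheory Real Set

lemma rq_ne_zero (c t : ℝ) (hc : 0 ≤ c) : (0:ℝ) < 1 + t ^ 2 * c := by nlinarith [sq_nonneg t]

set_option maxHeartbeats 1000000 in
lemma rq_key (a c : ℝ) (hc : 0 ≤ c) (ψ : ℝ → ℝ)
    (hψ : ContDiff ℝ (⊤ : ℕ∞) ψ) (hcs : HasCompactSupport ψ)
    (hsub : tsupport ψ ⊆ Ioo (-a) a) :
    ∃ φ : ℝ → ℝ, ContDiff ℝ (⊤ : ℕ∞) φ ∧ HasCompactSupport φ ∧
      tsupport φ ⊆ Ioo (-a) a ∧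
      (∀ t, φ t * ((1 + t ^ 2 * c) ^ (4⁻¹ : ℝ)) = ψ t) ∧
      (∀ t, φ t ^ 2 * Real.sqrt (1 + t ^ 2 * c) = ψ t ^ 2) ∧
      (∀ E : ℝ, (∫ t in Ioo (-a) a, ((deriv ψ t) ^ 2 - E * (ψ t) ^ 2 +
          (c * (2 - t ^ 2 * c) / (4 * Real.sqrt (1 + t ^ 2 * c) ^ 4)) * (ψ t) ^ 2))
        = (∫ t in Ioo (-a) a, (deriv φ t) ^ 2 * Real.sqrt (1 + t ^ 2 * c))
          - E * ∫ t in Ioo (-a) a, (ψ t) ^ 2) := by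
  have hle : (1 : WithTop ℕ∞) ≤ ((⊤:ℕ∞) : WithTop ℕ∞) := by exact_mod_cast le_top
  have hu_pos : ∀ t : ℝ, (0:ℝ) < 1 + t ^ 2 * c := fun t => rq_ne_zero c t hc
  set u : ℝ → ℝ := fun t => 1 + t ^ 2 * c with hu_def
  have hu_cd : ContDiff ℝ (⊤ : ℕ∞) u := by
    apply ContDiff.add contDiff_const
    exact (contDiff_id.pow 2).mul contDiff_const
  have hu_deriv : ∀ t, HasDerivAt u (2 * t * c) t := by
    intro t
    have h1 : HasDerivAt (fun t : ℝ => t ^ 2) (2 * t) t := by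
      simpa using hasDerivAt_pow 2 t
    exact (h1.mul_const c).const_add 1
  set g : ℝ → ℝ := fun t => u t ^ (4⁻¹ : ℝ) with hg_def
  have hg_pos : ∀ t, 0 < g t := fun t => Real.rpow_pos_of_pos (hu_pos t) _
  have hg_cd : ContDiff ℝ (⊤ : ℕ∞) g := by
    rw [contDiff_iff_contDiffAt]
    intro t
    exact hu_cd.contDiffAt.rpow_const_of_ne (hu_pos t).ne'
  have hg_sq : ∀ t, g t ^ 2 = Real.sqrt (u t) := by
    intro t
    rw [hg_def, ← Real.rpow_natCast (u t ^ (4⁻¹:ℝ)) 2, ← Real.rpow_mul (hu_pos t).le,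
      Real.sqrt_eq_rpow]
    norm_num
    rfl
  set q : ℝ → ℝ := fun t => c * t / (2 * u t) with hq_def
  have hq_cd : ContDiff ℝ (⊤ : ℕ∞) q := by
    apply ContDiff.div (contDiff_const.mul contDiff_id) (contDiff_const.mul hu_cd)
    intro t
    positivity
  have hg_deriv : ∀ t, HasDerivAt g (q t * g t) t := by
    intro t
    have h := (hu_deriv t).rpow_const (p := (4⁻¹:ℝ)) (Or.inl (hu_pos t).ne')
    convert h using 1
    rw [show (4⁻¹ - 1 : ℝ) = 4⁻¹ - 1 from rfl, Real.rpow_sub (hu_pos t), Real.rpow_one]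
    have := (hu_pos t).ne'
    simp only [hq_def, hg_def, hu_def]
    field_simp
    ring
  have hq_deriv : ∀ t, HasDerivAt q (c / (2 * u t) - c ^ 2 * t ^ 2 / (u t) ^ 2) t := by
    intro t
    have hn : HasDerivAt (fun t : ℝ => c * t) c t := by
      simpa using (hasDerivAt_id t).const_mul c
    have hd : HasDerivAt (fun t : ℝ => 2 * u t) (2 * (2 * t * c)) t :=
      (hu_deriv t).const_mul 2
    have h := hn.div hd (by have := hu_pos t; positivity)
    refine h.congr_deriv ?_
    have : u t ≠ 0 := (hu_pos t).ne'
    field_simp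
  -- psi derivative facts
  have hψ_diff : ∀ t, HasDerivAt ψ (deriv ψ t) t := fun t =>
    ((hψ.differentiable (by simp)) t).hasDerivAt
  have hψc : Continuous ψ := hψ.continuous
  have hdψc : Continuous (deriv ψ) := hψ.continuous_deriv hle
  have hq_cont : Continuous q := hq_cd.continuous
  set φ : ℝ → ℝ := fun t => ψ t / g t with hφ_def
  have hφ_cd : ContDiff ℝ (⊤ : ℕ∞) φ := hψ.div hg_cd fun t => (hg_pos t).ne'
  have hφψ : ∀ t, φ t * g t = ψ t := fun t => div_mul_cancel₀ _ (hg_pos t).ne'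
  have hsupp_sub : Function.support φ ⊆ Function.support ψ := by
    intro t ht
    simp only [Function.mem_support] at ht ⊢
    intro h
    apply ht
    show ψ t / g t = 0
    rw [h, zero_div]
  have hφ_cs : HasCompactSupport φ := hcs.mono hsupp_sub
  have hφ_ts : tsupport φ ⊆ Ioo (-a) a := (closure_mono hsupp_sub).trans hsub
  have hφ_deriv : ∀ t, HasDerivAt φ ((deriv ψ t - q t * ψ t) / g t) t := by
    intro t
    have h := (hψ_diff t).div (hg_deriv t) (hg_pos t).ne'
    refine h.congr_deriv ?_
    have hg := (hg_pos t).ne'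
    rw [div_eq_div_iff (pow_ne_zero 2 hg) hg]
    ring
  have hφ_deriv' : ∀ t, deriv φ t = (deriv ψ t - q t * ψ t) / g t :=
    fun t => (hφ_deriv t).deriv
  have hden : ∀ t, φ t ^ 2 * Real.sqrt (1 + t ^ 2 * c) = ψ t ^ 2 := by
    intro t
    have h : Real.sqrt (1 + t ^ 2 * c) = g t ^ 2 := (hg_sq t).symm
    rw [h, hφ_def]
    have := (hg_pos t).ne'
    field_simp
  have e1 : ∀ t, (deriv φ t) ^ 2 * Real.sqrt (1 + t ^ 2 * c) = (deriv ψ t - q t * ψ t) ^ 2 := by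
    intro t
    have h : Real.sqrt (1 + t ^ 2 * c) = g t ^ 2 := (hg_sq t).symm
    rw [hφ_deriv' t, h]
    have := (hg_pos t).ne'
    field_simp
  refine ⟨φ, hφ_cd, hφ_cs, hφ_ts, fun t => hφψ t, hden, ?_⟩
  -- integration by parts part
  set G : ℝ → ℝ := fun t => (c / (2 * u t) - c ^ 2 * t ^ 2 / (u t) ^ 2) * ψ t ^ 2
      + q t * (2 * ψ t * deriv ψ t) with hG_def
  have hF_cd : ContDiff ℝ (⊤ : ℕ∞) (fun t => q t * ψ t ^ 2) := hq_cd.mul (hψ.pow 2)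
  have hF_cs : HasCompactSupport (fun t => q t * ψ t ^ 2) := by
    apply hcs.mono
    intro t ht
    simp only [Function.mem_support] at ht ⊢
    intro h; apply ht; simp [h]
  have hF_deriv : ∀ t, HasDerivAt (fun t => q t * ψ t ^ 2) (G t) t := by
    intro t
    have h := (hq_deriv t).mul ((hψ_diff t).pow 2)
    refine h.congr_deriv ?_
    show _ = (c / (2 * u t) - c ^ 2 * t ^ 2 / (u t) ^ 2) * ψ t ^ 2 + q t * (2 * ψ t * deriv ψ t)
    simp only [Pi.pow_apply]
    ring
  have hderiv_eq : deriv (fun t => q t * ψ t ^ 2) = G := funext fun t => (hF_deriv t).deriv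
  have hG_cont : Continuous G := by
    rw [← hderiv_eq]
    exact hF_cd.continuous_deriv hle
  have hG_cs : HasCompactSupport G := by
    apply hcs.mono
    intro t ht
    simp only [Function.mem_support] at ht ⊢
    intro h; apply ht; simp [hG_def, h]
  have hGint : Integrable G := hG_cont.integrable_of_hasCompactSupport hG_cs
  have hG0 : ∫ t, G t = 0 := by
    have h1 := HasCompactSupport.integral_Iic_deriv_eq (hF_cd.of_le hle) hF_cs 0
    have h2 := HasCompactSupport.integral_Ioi_deriv_eq (hF_cd.of_le hle) hF_cs 0
    rw [hderiv_eq] at h1 h2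
    have h3 := intervalIntegral.integral_Iic_add_Ioi (b := 0) (f := G)
      hGint.integrableOn hGint.integrableOn
    rw [h1, h2] at h3
    linarith [h3]
  -- zero off support
  have hψ0 : ∀ t, t ∉ tsupport ψ → ψ t = 0 := fun t ht => image_eq_zero_of_notMem_tsupport ht
  have hdψ0 : ∀ t, t ∉ tsupport ψ → deriv ψ t = 0 := by
    intro t ht
    by_contra h
    exact ht (support_deriv_subset (Function.mem_support.mpr h))
  have hdφ0 : ∀ t, t ∉ Ioo (-a) a → deriv φ t = 0 := by
    intro t ht
    by_contra h
    exact ht (hφ_ts (support_deriv_subset (Function.mem_support.mpr h)))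
  -- integrability
  have hψ2_cs : HasCompactSupport (fun t => ψ t ^ 2) := by
    apply hcs.mono
    intro t ht
    simp only [Function.mem_support] at ht ⊢
    intro h; apply ht; simp [h]
  have intψ2 : Integrable (fun t => ψ t ^ 2) :=
    (hψc.pow 2).integrable_of_hasCompactSupport hψ2_cs
  have intA : Integrable (fun t => (deriv ψ t - q t * ψ t) ^ 2) := by
    apply Continuous.integrable_of_hasCompactSupport
      (((hdψc.sub (hq_cont.mul hψc)).pow 2))
    apply hcs.mono'
    intro t ht
    by_contra h
    apply ht
    simp [hψ0 t h, hdψ0 t h]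
  intro E
  have hsqrt4 : ∀ t : ℝ, Real.sqrt (1 + t ^ 2 * c) ^ 4 = (1 + t ^ 2 * c) ^ 2 := by
    intro t
    rw [show (4:ℕ) = 2*2 from rfl, pow_mul, Real.sq_sqrt (hu_pos t).le]
  have P : ∀ t, (deriv ψ t) ^ 2 - E * (ψ t) ^ 2 +
      (c * (2 - t ^ 2 * c) / (4 * Real.sqrt (1 + t ^ 2 * c) ^ 4)) * (ψ t) ^ 2
      = ((deriv ψ t - q t * ψ t) ^ 2 + G t) - E * ψ t ^ 2 := by
    intro t
    rw [hsqrt4 t]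
    have hune := (hu_pos t).ne'
    simp only [hG_def, hq_def, hu_def]
    have h1 : (1 + t ^ 2 * c) ≠ 0 := (hu_pos t).ne'
    field_simp
    ring
  have h1 : (∫ t in Ioo (-a) a, ((deriv ψ t) ^ 2 - E * (ψ t) ^ 2 +
      (c * (2 - t ^ 2 * c) / (4 * Real.sqrt (1 + t ^ 2 * c) ^ 4)) * (ψ t) ^ 2))
      = ∫ t, ((deriv ψ t) ^ 2 - E * (ψ t) ^ 2 +
      (c * (2 - t ^ 2 * c) / (4 * Real.sqrt (1 + t ^ 2 * c) ^ 4)) * (ψ t) ^ 2) := by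
    apply setIntegral_eq_integral_of_forall_compl_eq_zero
    intro x hx
    rw [hψ0 x (fun h => hx (hsub h)), hdψ0 x (fun h => hx (hsub h))]
    ring
  have h2 : (∫ t in Ioo (-a) a, (deriv φ t) ^ 2 * Real.sqrt (1 + t ^ 2 * c))
      = ∫ t, (deriv φ t) ^ 2 * Real.sqrt (1 + t ^ 2 * c) := by
    apply setIntegral_eq_integral_of_forall_compl_eq_zero
    intro x hx
    rw [hdφ0 x hx]
    ring
  have h3 : (∫ t in Ioo (-a) a, (ψ t) ^ 2) = ∫ t, (ψ t) ^ 2 := by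
    apply setIntegral_eq_integral_of_forall_compl_eq_zero
    intro x hx
    rw [hψ0 x (fun h => hx (hsub h))]
    ring
  rw [h1, h2, h3]
  calc (∫ t, ((deriv ψ t) ^ 2 - E * (ψ t) ^ 2 +
        (c * (2 - t ^ 2 * c) / (4 * Real.sqrt (1 + t ^ 2 * c) ^ 4)) * (ψ t) ^ 2))
      = ∫ t, (((deriv ψ t - q t * ψ t) ^ 2 + G t) - E * ψ t ^ 2) := by
        simp only [P]
    _ = (∫ t, ((deriv ψ t - q t * ψ t) ^ 2 + G t)) - ∫ t, E * ψ t ^ 2 :=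
        integral_sub (intA.add hGint) (intψ2.const_mul E)
    _ = ((∫ t, (deriv ψ t - q t * ψ t) ^ 2) + ∫ t, G t) - E * ∫ t, ψ t ^ 2 := by
        rw [integral_add intA hGint, MeasureTheory.integral_const_mul]
    _ = (∫ t, (deriv φ t) ^ 2 * Real.sqrt (1 + t ^ 2 * c)) - E * ∫ t, ψ t ^ 2 := by
        rw [hG0, add_zero]
        congr 1
        exact (MeasureTheory.integral_congr_ae (μ := volume) (Filter.Eventually.of_forall fun t => e1 t)).symm

lemma rq_g_pos (c t : ℝ) (hc : 0 ≤ c) : 0 < (1 + t ^ 2 * c) ^ (4⁻¹ : ℝ) :=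
  Real.rpow_pos_of_pos (rq_ne_zero c t hc) _

lemma rq_g_cd (c : ℝ) (hc : 0 ≤ c) :
    ContDiff ℝ (⊤ : ℕ∞) (fun t : ℝ => (1 + t ^ 2 * c) ^ (4⁻¹ : ℝ)) := by
  rw [contDiff_iff_contDiffAt]
  intro t
  have hu : ContDiff ℝ (⊤ : ℕ∞) (fun t : ℝ => 1 + t ^ 2 * c) :=
    contDiff_const.add ((contDiff_id.pow 2).mul contDiff_const)
  exact hu.contDiffAt.rpow_const_of_ne (rq_ne_zero c t hc).ne'

lemma rq_pos_integral (a : ℝ) (ψ : ℝ → ℝ) (hcont : Continuous ψ)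
    (hcs : HasCompactSupport ψ) (hsub : tsupport ψ ⊆ Ioo (-a) a) (hne : ψ ≠ 0) :
    0 < ∫ t in Ioo (-a) a, (ψ t) ^ 2 := by
  have h0 : ∀ x ∉ Ioo (-a) a, (ψ x) ^ 2 = 0 := fun x hx => by
    rw [image_eq_zero_of_notMem_tsupport (fun h => hx (hsub h))]; ring
  rw [setIntegral_eq_integral_of_forall_compl_eq_zero h0]
  have hcs2 : HasCompactSupport (fun t => ψ t ^ 2) := by
    apply hcs.mono
    intro t ht
    simp only [Function.mem_support] at ht ⊢
    intro h; exact ht (by simp [h])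
  have hint : Integrable (fun t => ψ t ^ 2) :=
    (hcont.pow 2).integrable_of_hasCompactSupport hcs2
  rw [integral_pos_iff_support_of_nonneg (fun t => sq_nonneg _) hint]
  have hsupp : Function.support (fun t => ψ t ^ 2) = Function.support ψ := by
    ext t; simp [pow_eq_zero_iff]
  rw [hsupp]
  have hopen : IsOpen (Function.support ψ) := by
    rw [Function.support_eq_preimage]
    exact isOpen_compl_singleton.preimage hcont
  exact hopen.measure_pos volume (Function.support_nonempty_iff.mpr hne)

lemma rq_main (a : ℝ) (ha : 0 < a) (c : ℝ) (hc : 0 ≤ c) (E : ℝ) :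
    sInf {r : ℝ | ∃ φ : ℝ → ℝ, ContDiff ℝ (⊤ : ℕ∞) φ ∧ HasCompactSupport φ ∧
        tsupport φ ⊆ Ioo (-a) a ∧ φ ≠ 0 ∧
        r = (∫ t in Ioo (-a) a, (deriv φ t) ^ 2 * Real.sqrt (1 + t ^ 2 * c)) /
            (∫ t in Ioo (-a) a, (φ t) ^ 2 * Real.sqrt (1 + t ^ 2 * c))} - E
    =
    sInf {r : ℝ | ∃ φ : ℝ → ℝ, ContDiff ℝ (⊤ : ℕ∞) φ ∧ HasCompactSupport φ ∧
        tsupport φ ⊆ Ioo (-a) a ∧ φ ≠ 0 ∧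
        r = (∫ t in Ioo (-a) a,
              ((deriv φ t) ^ 2 - E * (φ t) ^ 2 +
                (c * (2 - t ^ 2 * c) /
                  (4 * Real.sqrt (1 + t ^ 2 * c) ^ 4)) * (φ t) ^ 2)) /
            (∫ t in Ioo (-a) a, (φ t) ^ 2)} := by
  set S₁ := {r : ℝ | ∃ φ : ℝ → ℝ, ContDiff ℝ (⊤ : ℕ∞) φ ∧ HasCompactSupport φ ∧
        tsupport φ ⊆ Ioo (-a) a ∧ φ ≠ 0 ∧
        r = (∫ t in Ioo (-a) a, (deriv φ t) ^ 2 * Real.sqrt (1 + t ^ 2 * c)) /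
            (∫ t in Ioo (-a) a, (φ t) ^ 2 * Real.sqrt (1 + t ^ 2 * c))} with hS₁
  set S₂ := {r : ℝ | ∃ φ : ℝ → ℝ, ContDiff ℝ (⊤ : ℕ∞) φ ∧ HasCompactSupport φ ∧
        tsupport φ ⊆ Ioo (-a) a ∧ φ ≠ 0 ∧
        r = (∫ t in Ioo (-a) a,
              ((deriv φ t) ^ 2 - E * (φ t) ^ 2 +
                (c * (2 - t ^ 2 * c) /
                  (4 * Real.sqrt (1 + t ^ 2 * c) ^ 4)) * (φ t) ^ 2)) /
            (∫ t in Ioo (-a) a, (φ t) ^ 2)} with hS₂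
  -- direction 1 : elements of S₂ come from S₁
  have hS2S1 : ∀ r ∈ S₂, ∃ r' ∈ S₁, r = r' - E := by
    rintro r ⟨ψ, hψcd, hψcs, hψsub, hψne, rfl⟩
    obtain ⟨φ, hφcd, hφcs, hφsub, hmul, hden, hnum⟩ := rq_key a c hc ψ hψcd hψcs hψsub
    have hφne : φ ≠ 0 := by
      intro h
      apply hψne
      funext t
      rw [← hmul t, h]
      simp
    have hD : 0 < ∫ t in Ioo (-a) a, (ψ t) ^ 2 :=
      rq_pos_integral a ψ hψcd.continuous hψcs hψsub hψne
    have hDeq : (∫ t in Ioo (-a) a, (φ t) ^ 2 * Real.sqrt (1 + t ^ 2 * c))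
        = ∫ t in Ioo (-a) a, (ψ t) ^ 2 := by
      simp only [hden]
    refine ⟨(∫ t in Ioo (-a) a, (deriv φ t) ^ 2 * Real.sqrt (1 + t ^ 2 * c)) /
        (∫ t in Ioo (-a) a, (φ t) ^ 2 * Real.sqrt (1 + t ^ 2 * c)),
      ⟨φ, hφcd, hφcs, hφsub, hφne, rfl⟩, ?_⟩
    rw [hnum E, hDeq, sub_div, mul_div_assoc, div_self hD.ne', mul_one]
  -- direction 2 : S₁ elements shifted by E are in S₂
  have hS1S2 : ∀ r ∈ S₁, r - E ∈ S₂ := by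
    rintro r ⟨φ₀, hφ₀cd, hφ₀cs, hφ₀sub, hφ₀ne, rfl⟩
    set ψ : ℝ → ℝ := fun t => φ₀ t * ((1 + t ^ 2 * c) ^ (4⁻¹ : ℝ)) with hψ_def
    have hψcd : ContDiff ℝ (⊤ : ℕ∞) ψ := hφ₀cd.mul (rq_g_cd c hc)
    have hψsupp : Function.support ψ ⊆ Function.support φ₀ := by
      intro t ht
      simp only [Function.mem_support] at ht ⊢
      intro h
      apply ht
      show φ₀ t * _ = 0
      rw [h, zero_mul]
    have hψcs : HasCompactSupport ψ := hφ₀cs.mono hψsupp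
    have hψsub : tsupport ψ ⊆ Ioo (-a) a := (closure_mono hψsupp).trans hφ₀sub
    have hψne : ψ ≠ 0 := by
      intro h
      apply hφ₀ne
      funext t
      have ht : ψ t = 0 := by rw [h]; rfl
      have := mul_eq_zero.mp ht
      rcases this with h' | h'
      · exact h'
      · exact absurd h' (rq_g_pos c t hc).ne'
    obtain ⟨φ, hφcd, hφcs, hφsub, hmul, hden, hnum⟩ := rq_key a c hc ψ hψcd hψcs hψsub
    have hφeq : φ = φ₀ := by
      funext t
      have h1 : φ t * ((1 + t ^ 2 * c) ^ (4⁻¹ : ℝ)) = φ₀ t * ((1 + t ^ 2 * c) ^ (4⁻¹ : ℝ)) :=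
        hmul t
      exact mul_right_cancel₀ (rq_g_pos c t hc).ne' h1
    rw [hφeq] at hden hnum
    have hD : 0 < ∫ t in Ioo (-a) a, (ψ t) ^ 2 :=
      rq_pos_integral a ψ hψcd.continuous hψcs hψsub hψne
    have hDeq : (∫ t in Ioo (-a) a, (φ₀ t) ^ 2 * Real.sqrt (1 + t ^ 2 * c))
        = ∫ t in Ioo (-a) a, (ψ t) ^ 2 := by
      simp only [hden]
    refine ⟨ψ, hψcd, hψcs, hψsub, hψne, ?_⟩
    rw [hnum E, hDeq, sub_div, mul_div_assoc, div_self hD.ne', mul_one]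
  -- nonemptiness of S₁
  have hne₁ : S₁.Nonempty := by
    let f : ContDiffBump (0 : ℝ) := ⟨a / 3, a / 2, by positivity, by linarith⟩
    have hfsub : tsupport (f : ℝ → ℝ) ⊆ Ioo (-a) a := by
      rw [f.tsupport_eq]
      intro x hx
      simp only [Metric.mem_closedBall, Real.dist_eq, sub_zero] at hx
      have h1 : |x| ≤ a / 2 := hx
      rw [abs_le] at h1
      constructor <;> [linarith; linarith]
    have hfne : (f : ℝ → ℝ) ≠ 0 := by
      intro h
      have h0 : (f : ℝ → ℝ) 0 = 1 := f.one_of_mem_closedBall (by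
        simp [Metric.mem_closedBall, f.rIn_pos.le])
      rw [h] at h0
      simp at h0
    refine ⟨_, ⟨(f : ℝ → ℝ), ?_, f.hasCompactSupport, hfsub, hfne, rfl⟩⟩
    exact f.contDiff
  -- lower bounds
  have hbdd₁ : ∀ r ∈ S₁, 0 ≤ r := by
    rintro r ⟨φ, hφcd, hφcs, hφsub, hφne, rfl⟩
    apply div_nonneg
    · apply setIntegral_nonneg measurableSet_Ioo
      intro t _
      positivity
    · apply setIntegral_nonneg measurableSet_Ioo
      intro t _
      positivity
  have hBdd₁ : BddBelow S₁ := ⟨0, fun r hr => hbdd₁ r hr⟩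
  have hBdd₂ : BddBelow S₂ := by
    refine ⟨-E, fun r hr => ?_⟩
    obtain ⟨r', hr', rfl⟩ := hS2S1 r hr
    have := hbdd₁ r' hr'
    linarith
  have hne₂ : S₂.Nonempty := by
    obtain ⟨r, hr⟩ := hne₁
    exact ⟨r - E, hS1S2 r hr⟩
  apply le_antisymm
  · apply le_csInf hne₂
    intro r hr
    obtain ⟨r', hr', rfl⟩ := hS2S1 r hr
    have := csInf_le hBdd₁ hr'
    linarith
  · have h : ∀ r ∈ S₁, sInf S₂ ≤ r - E := fun r hr => csInf_le hBdd₂ (hS1S2 r hr)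
    have h2 : sInf S₂ + E ≤ sInf S₁ := by
      apply le_csInf hne₁
      intro r hr
      have := h r hr
      linarith
    linarith


/-- **Lemma (ground-state substitution).** For each fixed `s`, the Rayleigh
quotient infimum defining `λ(s)` (with weight `h₀(s,·)`) minus `E₁` equals the
infimum of the Rayleigh quotient of the one-dimensional Schrödinger operator
`-d²/dt² - E₁ + V(s,·)` with the effective potential
`V(s,t) = σ(s)²(2 - t²σ(s)²)/(4 h₀(s,t)⁴)`. -/
theorem rayleigh_quotient_substitution
    (a : ℝ) (ha : 0 < a)
    (σ : ℝ → ℝ) (hσcont : Continuous σ) (hσbdd : ∃ M, ∀ s, |σ s| ≤ M)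
    (s : ℝ) :
    sInf {r : ℝ | ∃ φ : ℝ → ℝ, ContDiff ℝ (⊤ : ℕ∞) φ ∧ HasCompactSupport φ ∧
        tsupport φ ⊆ Ioo (-a) a ∧ φ ≠ 0 ∧
        r = (∫ t in Ioo (-a) a, (deriv φ t) ^ 2 * Real.sqrt (1 + t ^ 2 * σ s ^ 2)) /
            (∫ t in Ioo (-a) a, (φ t) ^ 2 * Real.sqrt (1 + t ^ 2 * σ s ^ 2))}
      - π ^ 2 / (2 * a) ^ 2
    =
    sInf {r : ℝ | ∃ φ : ℝ → ℝ, ContDiff ℝ (⊤ : ℕ∞) φ ∧ HasCompactSupport φ ∧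
        tsupport φ ⊆ Ioo (-a) a ∧ φ ≠ 0 ∧
        r = (∫ t in Ioo (-a) a,
              ((deriv φ t) ^ 2 - (π ^ 2 / (2 * a) ^ 2) * (φ t) ^ 2 +
                (σ s ^ 2 * (2 - t ^ 2 * σ s ^ 2) /
                  (4 * Real.sqrt (1 + t ^ 2 * σ s ^ 2) ^ 4)) * (φ t) ^ 2)) /
            (∫ t in Ioo (-a) a, (φ t) ^ 2)} := by
  exact rq_main a ha (σ s ^ 2) (sq_nonneg _) (π ^ 2 / (2 * a) ^ 2)
end

section
/- Let a > 0 and let σ : ℝ → ℝ be bounded and continuous with σ not identically zero and a·‖σ‖_∞ < √2. Let λ : ℝ → ℝ be defined by λ(s) := inf over φ ∈ C_c^∞((−a,a)) \ {0} of (∫_{−a}^a |φ'(t)|² h₀(s,t) dt)/(∫_{−a}^a |φ(t)|² h₀(s,t) dt) − E₁. Then for every ψ ∈ C_c^∞(ℝ × (−a,a)) one has the local Hardy inequality Q₀[ψ] − E₁·∥ψ∥²_{H₀} ≥ ∫_{ℝ×(−a,a)} h₀(s,t)^{-1} |∂_s ψ(s,t)|² ds dt + ∫_{ℝ×(−a,a)}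 λ(s) |ψ(s,t)|² h₀(s,t) ds dt. -/
open MeasureTheory Real Set

/-- **Local Hardy inequality.** With
`λ(s) = inf_{φ ∈ C_c^∞((-a,a)) \ {0}} (∫ |φ'|² h₀(s,·))/(∫ |φ|² h₀(s,·)) - E₁`,
one has, for every test function `ψ ∈ C_c^∞(ℝ × (-a,a))`,
`Q₀[ψ] - E₁ ‖ψ‖²_{H₀} ≥ ‖h₀⁻¹ ∂₁ψ‖²_{H₀} + ‖λ^{1/2} ψ‖²_{H₀}`. -/
theorem local_hardy_inequality
    (a : ℝ) (ha : 0 < a)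
    (σ : ℝ → ℝ) (hσcont : Continuous σ) (hσbdd : ∃ M, ∀ s, |σ s| ≤ M)
    (hσne : ∃ s, σ s ≠ 0)
    (hthin : a * (⨆ s, |σ s|) < Real.sqrt 2)
    (lam : ℝ → ℝ)
    (hlam : ∀ s, lam s =
      sInf {r : ℝ | ∃ φ : ℝ → ℝ, ContDiff ℝ (⊤ : ℕ∞) φ ∧ HasCompactSupport φ ∧
        tsupport φ ⊆ Ioo (-a) a ∧ φ ≠ 0 ∧
        r = (∫ t in Ioo (-a) a, (deriv φ t) ^ 2 * Real.sqrt (1 + t ^ 2 * σ s ^ 2)) /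
            (∫ t in Ioo (-a) a, (φ t) ^ 2 * Real.sqrt (1 + t ^ 2 * σ s ^ 2))}
      - π ^ 2 / (2 * a) ^ 2) :
    ∀ ψ : ℝ → ℝ → ℂ,
      ContDiff ℝ (⊤ : ℕ∞) (fun p : ℝ × ℝ => ψ p.1 p.2) →
      HasCompactSupport (fun p : ℝ × ℝ => ψ p.1 p.2) →
      tsupport (fun p : ℝ × ℝ => ψ p.1 p.2) ⊆ univ ×ˢ Ioo (-a) a →
      ((∫ s : ℝ, ∫ t in Ioo (-a) a,
            (Real.sqrt (1 + t ^ 2 * σ s ^ 2))⁻¹ *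
              ‖deriv (fun x => ψ x t) s‖ ^ 2) +
          (∫ s : ℝ, ∫ t in Ioo (-a) a,
            Real.sqrt (1 + t ^ 2 * σ s ^ 2) * ‖deriv (ψ s) t‖ ^ 2)) -
          (π ^ 2 / (2 * a) ^ 2) *
            (∫ s : ℝ, ∫ t in Ioo (-a) a,
              ‖ψ s t‖ ^ 2 * Real.sqrt (1 + t ^ 2 * σ s ^ 2)) ≥
        (∫ s : ℝ, ∫ t in Ioo (-a) a,
            (Real.sqrt (1 + t ^ 2 * σ s ^ 2))⁻¹ *
              ‖deriv (fun x => ψ x t) s‖ ^ 2) +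
        (∫ s : ℝ, ∫ t in Ioo (-a) a,
            lam s * ‖ψ s t‖ ^ 2 * Real.sqrt (1 + t ^ 2 * σ s ^ 2)) := by
  intro ψ hsmooth hcs hsupp
  obtain ⟨M, hM⟩ := hσbdd
  have hM0 : 0 ≤ M := le_trans (abs_nonneg _) (hM 0)
  have htop1 : (1 : WithTop ℕ∞) ≤ ((⊤ : ℕ∞) : WithTop ℕ∞) := by exact_mod_cast le_top
  set E : ℝ := π ^ 2 / (2 * a) ^ 2 with hE
  set S : ℝ → Set ℝ := fun s => {r : ℝ | ∃ φ : ℝ → ℝ, ContDiff ℝ (⊤ : ℕ∞) φ ∧ HasCompactSupport φ ∧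
        tsupport φ ⊆ Ioo (-a) a ∧ φ ≠ 0 ∧
        r = (∫ t in Ioo (-a) a, (deriv φ t) ^ 2 * Real.sqrt (1 + t ^ 2 * σ s ^ 2)) /
            (∫ t in Ioo (-a) a, (φ t) ^ 2 * Real.sqrt (1 + t ^ 2 * σ s ^ 2))} with hSdef
  -- basic facts about the weight
  have hone : ∀ s t : ℝ, (1:ℝ) ≤ Real.sqrt (1 + t ^ 2 * σ s ^ 2) := by
    intro s t; rw [Real.one_le_sqrt]; nlinarith [sq_nonneg t, sq_nonneg (σ s), sq_nonneg (t * σ s)]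
  have hpos : ∀ s t : ℝ, (0:ℝ) < Real.sqrt (1 + t ^ 2 * σ s ^ 2) := fun s t =>
    lt_of_lt_of_le one_pos (hone s t)
  set Hmax : ℝ := Real.sqrt (1 + a ^ 2 * M ^ 2) with hHm
  have hHmax : ∀ s : ℝ, ∀ t ∈ Ioo (-a) a, Real.sqrt (1 + t ^ 2 * σ s ^ 2) ≤ Hmax := by
    intro s t ht
    apply Real.sqrt_le_sqrt
    have h1 : t ^ 2 ≤ a ^ 2 := sq_le_sq' (le_of_lt ht.1) (le_of_lt ht.2)
    have h2 : σ s ^ 2 ≤ M ^ 2 := sq_le_sq' (by linarith [(abs_le.mp (hM s)).1]) (abs_le.mp (hM s)).2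
    nlinarith [sq_nonneg (σ s), sq_nonneg t]
  have hwconts : ∀ s, Continuous fun t : ℝ => Real.sqrt (1 + t ^ 2 * σ s ^ 2) := fun s =>
    Real.continuous_sqrt.comp (continuous_const.add ((continuous_pow 2).mul continuous_const))
  have hwconts2 : ∀ t : ℝ, Continuous fun s : ℝ => Real.sqrt (1 + t ^ 2 * σ s ^ 2) := fun t =>
    Real.continuous_sqrt.comp (continuous_const.add (continuous_const.mul (hσcont.pow 2)))
  have intIoo : ∀ f : ℝ → ℝ, Continuous f → IntegrableOn f (Ioo (-a) a) volume := fun f hf =>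
    (hf.continuousOn.integrableOn_compact isCompact_Icc).mono_set Ioo_subset_Icc_self
  -- positivity of denominators
  have denom_pos : ∀ (s : ℝ) (φ : ℝ → ℝ), Continuous φ → tsupport φ ⊆ Ioo (-a) a → φ ≠ 0 →
      0 < ∫ t in Ioo (-a) a, (φ t) ^ 2 * Real.sqrt (1 + t ^ 2 * σ s ^ 2) := by
    intro s φ hc hts hne
    have hint : IntegrableOn (fun t => (φ t) ^ 2 * Real.sqrt (1 + t ^ 2 * σ s ^ 2))
        (Ioo (-a) a) volume := intIoo _ ((hc.pow 2).mul (hwconts s))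
    have hnn : (0 : ℝ → ℝ) ≤ᶠ[ae (volume.restrict (Ioo (-a) a))]
        fun t => (φ t) ^ 2 * Real.sqrt (1 + t ^ 2 * σ s ^ 2) :=
      Filter.Eventually.of_forall fun t => by positivity
    rw [setIntegral_pos_iff_support_of_nonneg_ae hnn hint]
    obtain ⟨t₀, ht₀⟩ := Function.ne_iff.mp hne
    have hsub : Function.support φ ⊆
        Function.support (fun t => (φ t) ^ 2 * Real.sqrt (1 + t ^ 2 * σ s ^ 2)) ∩ Ioo (-a) a := by
      intro t ht
      refine ⟨?_, hts (subset_tsupport φ ht)⟩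
      have ht' : φ t ≠ 0 := ht
      exact mul_ne_zero (pow_ne_zero 2 ht') (ne_of_gt (hpos s t))
    refine lt_of_lt_of_le ?_ (measure_mono hsub)
    exact (hc.isOpen_support).measure_pos volume ⟨t₀, ht₀⟩
  -- membership in S
  have memS : ∀ (s : ℝ) (φ : ℝ → ℝ), ContDiff ℝ (⊤ : ℕ∞) φ → HasCompactSupport φ →
      tsupport φ ⊆ Ioo (-a) a → φ ≠ 0 →
      ((∫ t in Ioo (-a) a, (deriv φ t) ^ 2 * Real.sqrt (1 + t ^ 2 * σ s ^ 2)) /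
        (∫ t in Ioo (-a) a, (φ t) ^ 2 * Real.sqrt (1 + t ^ 2 * σ s ^ 2))) ∈ S s :=
    fun s φ h1 h2 h3 h4 => ⟨φ, h1, h2, h3, h4, rfl⟩
  have Snonneg : ∀ s : ℝ, ∀ r ∈ S s, (0:ℝ) ≤ r := by
    rintro s r ⟨φ, hφ1, hφ2, hφ3, hφ4, rfl⟩
    apply div_nonneg
    · exact setIntegral_nonneg measurableSet_Ioo fun t _ => by positivity
    · exact (denom_pos s φ hφ1.continuous hφ3 hφ4).le
  have Sbdd : ∀ s, BddBelow (S s) := fun s => ⟨0, fun r hr => Snonneg s r hr⟩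
  -- a reference bump function
  have hlt : a / 2 < 3 * a / 4 := by linarith
  set φ₀ : ContDiffBump (0:ℝ) := ⟨a/2, 3*a/4, by linarith, hlt⟩ with hφ₀def
  have hφ₀c : ContDiff ℝ (⊤ : ℕ∞) (φ₀ : ℝ → ℝ) := φ₀.contDiff
  have hφ₀cs : HasCompactSupport (φ₀ : ℝ → ℝ) := φ₀.hasCompactSupport
  have hφ₀ts : tsupport (φ₀ : ℝ → ℝ) ⊆ Ioo (-a) a := by
    rw [φ₀.tsupport_eq]
    intro x hx
    simp only [Metric.mem_closedBall, Real.dist_eq, sub_zero] at hx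
    obtain ⟨h1, h2⟩ := abs_le.mp hx
    exact ⟨by linarith [show φ₀.rOut = 3*a/4 from rfl], by linarith [show φ₀.rOut = 3*a/4 from rfl]⟩
  have hφ₀ne : (φ₀ : ℝ → ℝ) ≠ 0 := by
    intro h0
    have h1 : (φ₀ : ℝ → ℝ) 0 = 1 :=
      φ₀.one_of_mem_closedBall (Metric.mem_closedBall_self (by positivity))
    rw [h0] at h1
    simp at h1
  have Sne : ∀ s, (S s).Nonempty := fun s => ⟨_, memS s φ₀ hφ₀c hφ₀cs hφ₀ts hφ₀ne⟩
  have hΛnn : ∀ s, 0 ≤ sInf (S s) := fun s => Real.sInf_nonneg (Snonneg s)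
  -- continuity of weighted integrals in s
  have contInt : ∀ g : ℝ → ℝ, Continuous g →
      Continuous fun s => ∫ t in Ioo (-a) a, g t * Real.sqrt (1 + t ^ 2 * σ s ^ 2) := by
    intro g hg
    obtain ⟨Cg, hCg⟩ := isCompact_Icc.exists_bound_of_continuousOn
      (hg.continuousOn : ContinuousOn g (Icc (-a) a))
    refine continuous_of_dominated (bound := fun _ => Cg * Hmax)
      (fun s => ((hg.mul (hwconts s)).aestronglyMeasurable)) (fun s => ?_) ?_ ?_
    · refine (ae_restrict_iff' measurableSet_Ioo).mpr (Filter.Eventually.of_forall fun t ht => ?_)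
      have h1 : ‖g t‖ ≤ Cg := hCg t (Ioo_subset_Icc_self ht)
      calc ‖g t * Real.sqrt (1 + t ^ 2 * σ s ^ 2)‖
          = ‖g t‖ * Real.sqrt (1 + t ^ 2 * σ s ^ 2) := by
            rw [norm_mul, Real.norm_of_nonneg (Real.sqrt_nonneg _)]
        _ ≤ Cg * Hmax := mul_le_mul h1 (hHmax s t ht) (Real.sqrt_nonneg _)
            (le_trans (norm_nonneg _) h1)
    · exact (integrableOn_const_iff).mpr (Or.inr (by rw [Real.volume_Ioo]; exact ENNReal.ofReal_lt_top))
    · exact Filter.Eventually.of_forall fun t => continuous_const.mul (hwconts2 t)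
  -- measurability of s ↦ sInf (S s)
  have hΛmeas : Measurable fun s => sInf (S s) := by
    apply measurable_of_Iio
    intro c
    have hopen : IsOpen {s : ℝ | sInf (S s) < c} := by
      rw [isOpen_iff_mem_nhds]
      intro s₀ hs₀
      obtain ⟨r, hrS, hrc⟩ := (csInf_lt_iff (Sbdd s₀) (Sne s₀)).mp hs₀
      obtain ⟨φ, hφ1, hφ2, hφ3, hφ4, rfl⟩ := hrS
      have hN : Continuous fun s =>
          ∫ t in Ioo (-a) a, (deriv φ t) ^ 2 * Real.sqrt (1 + t ^ 2 * σ s ^ 2) :=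
        contInt _ ((hφ1.continuous_deriv htop1).pow 2)
      have hMc : Continuous fun s =>
          ∫ t in Ioo (-a) a, (φ t) ^ 2 * Real.sqrt (1 + t ^ 2 * σ s ^ 2) :=
        contInt _ (hφ1.continuous.pow 2)
      have hR : Continuous fun s =>
          (∫ t in Ioo (-a) a, (deriv φ t) ^ 2 * Real.sqrt (1 + t ^ 2 * σ s ^ 2)) /
          (∫ t in Ioo (-a) a, (φ t) ^ 2 * Real.sqrt (1 + t ^ 2 * σ s ^ 2)) :=
        hN.div hMc fun s => (denom_pos s φ hφ1.continuous hφ3 hφ4).ne'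
      filter_upwards [hR.continuousAt.eventually_lt continuousAt_const hrc] with s hs
      exact lt_of_le_of_lt (csInf_le (Sbdd s) (memS s φ hφ1 hφ2 hφ3 hφ4)) hs
    exact hopen.measurableSet
  -- the key one-dimensional inequality for real test functions
  have key1 : ∀ (s : ℝ) (w : ℝ → ℝ), ContDiff ℝ (⊤ : ℕ∞) w → HasCompactSupport w →
      tsupport w ⊆ Ioo (-a) a →
      sInf (S s) * ∫ t in Ioo (-a) a, (w t) ^ 2 * Real.sqrt (1 + t ^ 2 * σ s ^ 2) ≤
        ∫ t in Ioo (-a) a, (deriv w t) ^ 2 * Real.sqrt (1 + t ^ 2 * σ s ^ 2) := by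
    intro s w h1 h2 h3
    by_cases hw : w = 0
    · have hder : deriv (0 : ℝ → ℝ) = fun _ => (0:ℝ) := by
        funext t; exact deriv_const t 0
      rw [hw, hder]
      simp
    · have hmem := memS s w h1 h2 h3 hw
      have hle := csInf_le (Sbdd s) hmem
      have hd := denom_pos s w h1.continuous h3 hw
      exact (le_div_iff₀ hd).mp hle
  -- facts about slices ψ s
  have hψs : ∀ s, ContDiff ℝ (⊤ : ℕ∞) (ψ s) := fun s =>
    hsmooth.comp (contDiff_const.prodMk contDiff_id)
  have hsupp_s : ∀ s, tsupport (ψ s) ⊆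
      {t | (s, t) ∈ tsupport fun p : ℝ × ℝ => ψ p.1 p.2} := by
    intro s
    apply closure_minimal
    · intro t ht
      exact subset_tsupport _ ht
    · exact (isClosed_tsupport _).preimage (Continuous.prodMk_right s)
  have hcomp_s : ∀ s, IsCompact {t | (s, t) ∈ tsupport fun p : ℝ × ℝ => ψ p.1 p.2} := by
    intro s
    refine IsCompact.of_isClosed_subset (hcs.image continuous_snd)
      ((isClosed_tsupport _).preimage (Continuous.prodMk_right s)) ?_
    intro t ht; exact ⟨(s, t), ht, rfl⟩
  have hψs_cs : ∀ s, HasCompactSupport (ψ s) := fun s =>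
    IsCompact.of_isClosed_subset (hcomp_s s) (isClosed_tsupport _) (hsupp_s s)
  have hψs_ts : ∀ s, tsupport (ψ s) ⊆ Ioo (-a) a := fun s t ht =>
    (hsupp (hsupp_s s ht)).2
  -- the key inequality for complex slices
  have key2 : ∀ s : ℝ,
      sInf (S s) * ∫ t in Ioo (-a) a, ‖ψ s t‖ ^ 2 * Real.sqrt (1 + t ^ 2 * σ s ^ 2) ≤
      ∫ t in Ioo (-a) a, Real.sqrt (1 + t ^ 2 * σ s ^ 2) * ‖deriv (ψ s) t‖ ^ 2 := by
    intro s
    have hdiff : Differentiable ℝ (ψ s) := (hψs s).differentiable (by simp)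
    have hre : ∀ t, HasDerivAt (fun t => (ψ s t).re) ((deriv (ψ s) t).re) t := fun t =>
      Complex.reCLM.hasFDerivAt.comp_hasDerivAt t ((hdiff t).hasDerivAt)
    have him : ∀ t, HasDerivAt (fun t => (ψ s t).im) ((deriv (ψ s) t).im) t := fun t =>
      Complex.imCLM.hasFDerivAt.comp_hasDerivAt t ((hdiff t).hasDerivAt)
    have hdre : ∀ t, deriv (fun t => (ψ s t).re) t = (deriv (ψ s) t).re := fun t => (hre t).deriv
    have hdim : ∀ t, deriv (fun t => (ψ s t).im) t = (deriv (ψ s) t).im := fun t => (him t).deriv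
    have hucd : ContDiff ℝ (⊤ : ℕ∞) (fun t => (ψ s t).re) :=
      Complex.reCLM.contDiff.comp (hψs s)
    have hvcd : ContDiff ℝ (⊤ : ℕ∞) (fun t => (ψ s t).im) :=
      Complex.imCLM.contDiff.comp (hψs s)
    have hucs : HasCompactSupport (fun t => (ψ s t).re) :=
      (hψs_cs s).comp_left (g := Complex.re) (by simp)
    have hvcs : HasCompactSupport (fun t => (ψ s t).im) :=
      (hψs_cs s).comp_left (g := Complex.im) (by simp)
    have huts : tsupport (fun t => (ψ s t).re) ⊆ Ioo (-a) a := by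
      refine subset_trans (closure_minimal ?_ (isClosed_tsupport (ψ s))) (hψs_ts s)
      intro t ht
      refine subset_tsupport (ψ s) ?_
      intro h0
      exact ht (by show (ψ s t).re = 0; rw [h0]; rfl)
    have hvts : tsupport (fun t => (ψ s t).im) ⊆ Ioo (-a) a := by
      refine subset_trans (closure_minimal ?_ (isClosed_tsupport (ψ s))) (hψs_ts s)
      intro t ht
      refine subset_tsupport (ψ s) ?_
      intro h0
      exact ht (by show (ψ s t).im = 0; rw [h0]; rfl)
    have hnorm1 : (fun t => ‖ψ s t‖ ^ 2 * Real.sqrt (1 + t ^ 2 * σ s ^ 2)) =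
        fun t => ((fun t => (ψ s t).re) t) ^ 2 * Real.sqrt (1 + t ^ 2 * σ s ^ 2) +
          ((fun t => (ψ s t).im) t) ^ 2 * Real.sqrt (1 + t ^ 2 * σ s ^ 2) := by
      funext t
      rw [Complex.sq_norm, Complex.normSq_apply]
      ring
    have hnorm2 : (fun t => Real.sqrt (1 + t ^ 2 * σ s ^ 2) * ‖deriv (ψ s) t‖ ^ 2) =
        fun t => (deriv (fun t => (ψ s t).re) t) ^ 2 * Real.sqrt (1 + t ^ 2 * σ s ^ 2) +
          (deriv (fun t => (ψ s t).im) t) ^ 2 * Real.sqrt (1 + t ^ 2 * σ s ^ 2) := by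
      funext t
      rw [hdre t, hdim t, Complex.sq_norm, Complex.normSq_apply]
      ring
    have hi1 : IntegrableOn (fun t => ((fun t => (ψ s t).re) t) ^ 2 *
        Real.sqrt (1 + t ^ 2 * σ s ^ 2)) (Ioo (-a) a) volume :=
      intIoo _ ((hucd.continuous.pow 2).mul (hwconts s))
    have hi2 : IntegrableOn (fun t => ((fun t => (ψ s t).im) t) ^ 2 *
        Real.sqrt (1 + t ^ 2 * σ s ^ 2)) (Ioo (-a) a) volume :=
      intIoo _ ((hvcd.continuous.pow 2).mul (hwconts s))
    have hi3 : IntegrableOn (fun t => (deriv (fun t => (ψ s t).re) t) ^ 2 *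
        Real.sqrt (1 + t ^ 2 * σ s ^ 2)) (Ioo (-a) a) volume :=
      intIoo _ (((hucd.continuous_deriv htop1).pow 2).mul (hwconts s))
    have hi4 : IntegrableOn (fun t => (deriv (fun t => (ψ s t).im) t) ^ 2 *
        Real.sqrt (1 + t ^ 2 * σ s ^ 2)) (Ioo (-a) a) volume :=
      intIoo _ (((hvcd.continuous_deriv htop1).pow 2).mul (hwconts s))
    have hIC : (∫ t in Ioo (-a) a, ‖ψ s t‖ ^ 2 * Real.sqrt (1 + t ^ 2 * σ s ^ 2)) =
        (∫ t in Ioo (-a) a, ((fun t => (ψ s t).re) t) ^ 2 * Real.sqrt (1 + t ^ 2 * σ s ^ 2)) +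
        (∫ t in Ioo (-a) a, ((fun t => (ψ s t).im) t) ^ 2 * Real.sqrt (1 + t ^ 2 * σ s ^ 2)) := by
      rw [← integral_add hi1 hi2]; exact congrArg (integral _) hnorm1
    have hIB : (∫ t in Ioo (-a) a, Real.sqrt (1 + t ^ 2 * σ s ^ 2) * ‖deriv (ψ s) t‖ ^ 2) =
        (∫ t in Ioo (-a) a, (deriv (fun t => (ψ s t).re) t) ^ 2 * Real.sqrt (1 + t ^ 2 * σ s ^ 2)) +
        (∫ t in Ioo (-a) a, (deriv (fun t => (ψ s t).im) t) ^ 2 * Real.sqrt (1 + t ^ 2 * σ s ^ 2)) := by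
      rw [← integral_add hi3 hi4]; exact congrArg (integral _) hnorm2
    rw [hIC, hIB, mul_add]
    exact add_le_add (key1 s _ hucd hucs huts) (key1 s _ hvcd hvcs hvts)
  -- the transversal derivative as a continuous function of both variables
  set Dψ : ℝ × ℝ → ℂ := fun p => fderiv ℝ (fun p : ℝ × ℝ => ψ p.1 p.2) p (0, 1) with hDψdef
  have hDeq : ∀ s t : ℝ, deriv (ψ s) t = Dψ (s, t) := by
    intro s t
    have hfd : HasFDerivAt (fun p : ℝ × ℝ => ψ p.1 p.2)
        (fderiv ℝ (fun p : ℝ × ℝ => ψ p.1 p.2) (s, t)) (s, t) :=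
      ((hsmooth.differentiable (by simp)) (s, t)).hasFDerivAt
    have h1 : HasDerivAt (ψ s) (Dψ (s, t)) t :=
      hfd.comp_hasDerivAt t ((hasDerivAt_const t s).prodMk (hasDerivAt_id t))
    exact h1.deriv
  have hDcont : Continuous Dψ := (hsmooth.continuous_fderiv (by simp)).clm_apply continuous_const
  have hDzero : ∀ p : ℝ × ℝ, p ∉ tsupport (fun p : ℝ × ℝ => ψ p.1 p.2) → Dψ p = 0 := by
    intro p hp
    have hev : (fun p : ℝ × ℝ => ψ p.1 p.2) =ᶠ[nhds p] (fun _ => (0:ℂ)) := by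
      filter_upwards [(isClosed_tsupport _).isOpen_compl.mem_nhds hp] with q hq
      exact image_eq_zero_of_notMem_tsupport (f := fun p : ℝ × ℝ => ψ p.1 p.2) hq
    show fderiv ℝ (fun p : ℝ × ℝ => ψ p.1 p.2) p (0, 1) = 0
    rw [hev.fderiv_eq]
    simp
  have hDcs : HasCompactSupport Dψ := HasCompactSupport.intro hcs fun p hp => hDzero p hp
  obtain ⟨Cψ, hCψ⟩ := hcs.exists_bound_of_continuous hsmooth.continuous
  obtain ⟨CD, hCD⟩ := hDcs.exists_bound_of_continuous hDcont
  -- the slice integrals as functions of s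
  set Cf : ℝ → ℝ := fun s => ∫ t in Ioo (-a) a, ‖ψ s t‖ ^ 2 * Real.sqrt (1 + t ^ 2 * σ s ^ 2)
    with hCfdef
  set Bf : ℝ → ℝ := fun s => ∫ t in Ioo (-a) a, Real.sqrt (1 + t ^ 2 * σ s ^ 2) * ‖Dψ (s, t)‖ ^ 2
    with hBfdef
  have hCfcont : Continuous Cf := by
    simp only [hCfdef]
    refine continuous_of_dominated (bound := fun _ => Cψ ^ 2 * Hmax)
      (fun s => (((hψs s).continuous.norm.pow 2).mul (hwconts s)).aestronglyMeasurable)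
      (fun s => ?_) ?_ ?_
    · refine (ae_restrict_iff' measurableSet_Ioo).mpr (Filter.Eventually.of_forall fun t ht => ?_)
      have h1 : ‖ψ s t‖ ≤ Cψ := hCψ (s, t)
      have h2 : ‖ψ s t‖ ^ 2 ≤ Cψ ^ 2 := pow_le_pow_left₀ (norm_nonneg _) h1 2
      calc ‖‖ψ s t‖ ^ 2 * Real.sqrt (1 + t ^ 2 * σ s ^ 2)‖
          = ‖ψ s t‖ ^ 2 * Real.sqrt (1 + t ^ 2 * σ s ^ 2) := by
            rw [Real.norm_of_nonneg (by positivity)]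
        _ ≤ Cψ ^ 2 * Hmax := mul_le_mul h2 (hHmax s t ht) (Real.sqrt_nonneg _) (by positivity)
    · exact (integrableOn_const_iff).mpr (Or.inr (by rw [Real.volume_Ioo]; exact ENNReal.ofReal_lt_top))
    · refine Filter.Eventually.of_forall fun t => ?_
      exact (((hsmooth.continuous.comp (continuous_id.prodMk continuous_const)).norm.pow 2)).mul
        (hwconts2 t)
  have hBfcont : Continuous Bf := by
    simp only [hBfdef]
    refine continuous_of_dominated (bound := fun _ => Hmax * CD ^ 2)
      (fun s => ((hwconts s).mul ((hDcont.comp (Continuous.prodMk_right s)).norm.pow 2)).aestronglyMeasurable)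
      (fun s => ?_) ?_ ?_
    · refine (ae_restrict_iff' measurableSet_Ioo).mpr (Filter.Eventually.of_forall fun t ht => ?_)
      have h1 : ‖Dψ (s, t)‖ ≤ CD := hCD (s, t)
      have h2 : ‖Dψ (s, t)‖ ^ 2 ≤ CD ^ 2 := pow_le_pow_left₀ (norm_nonneg _) h1 2
      calc ‖Real.sqrt (1 + t ^ 2 * σ s ^ 2) * ‖Dψ (s, t)‖ ^ 2‖
          = Real.sqrt (1 + t ^ 2 * σ s ^ 2) * ‖Dψ (s, t)‖ ^ 2 := by
            rw [Real.norm_of_nonneg (by positivity)]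
        _ ≤ Hmax * CD ^ 2 := mul_le_mul (hHmax s t ht) h2 (by positivity)
            (le_trans (Real.sqrt_nonneg _) (hHmax s t ht))
    · exact (integrableOn_const_iff).mpr (Or.inr (by rw [Real.volume_Ioo]; exact ENNReal.ofReal_lt_top))
    · refine Filter.Eventually.of_forall fun t => ?_
      exact (hwconts2 t).mul ((hDcont.comp (continuous_id.prodMk continuous_const)).norm.pow 2)
  -- compact supports in s
  have hCzero : ∀ s, s ∉ Prod.fst '' tsupport (fun p : ℝ × ℝ => ψ p.1 p.2) →
      ∀ t : ℝ, ψ s t = 0 := by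
    intro s hs t
    by_contra h0
    exact hs ⟨(s, t), subset_tsupport _ h0, rfl⟩
  have hK1 : IsCompact (Prod.fst '' tsupport fun p : ℝ × ℝ => ψ p.1 p.2) :=
    hcs.image continuous_fst
  have hCf0 : ∀ s, s ∉ Prod.fst '' tsupport (fun p : ℝ × ℝ => ψ p.1 p.2) → Cf s = 0 := by
    intro s hs
    simp only [hCfdef]
    simp only [hCzero s hs]
    simp
  have hBf0 : ∀ s, s ∉ Prod.fst '' tsupport (fun p : ℝ × ℝ => ψ p.1 p.2) → Bf s = 0 := by
    intro s hs
    have hD0 : ∀ t : ℝ, Dψ (s, t) = 0 := fun t =>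
      hDzero _ (fun hmem => hs ⟨(s, t), hmem, rfl⟩)
    simp only [hBfdef]
    simp only [hD0]
    simp
  have hCfcs : HasCompactSupport Cf := HasCompactSupport.intro hK1 hCf0
  have hBfcs : HasCompactSupport Bf := HasCompactSupport.intro hK1 hBf0
  have hCfint : Integrable Cf volume := hCfcont.integrable_of_hasCompactSupport hCfcs
  have hBfint : Integrable Bf volume := hBfcont.integrable_of_hasCompactSupport hBfcs
  have hCfnn : ∀ s, 0 ≤ Cf s := by
    intro s
    simp only [hCfdef]
    exact setIntegral_nonneg measurableSet_Ioo fun t _ => by positivity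
  -- integrability of sInf (S s) * Cf s
  have hR₀cont : Continuous fun s =>
      (∫ t in Ioo (-a) a, (deriv (φ₀ : ℝ → ℝ) t) ^ 2 * Real.sqrt (1 + t ^ 2 * σ s ^ 2)) /
      (∫ t in Ioo (-a) a, ((φ₀ : ℝ → ℝ) t) ^ 2 * Real.sqrt (1 + t ^ 2 * σ s ^ 2)) := by
    refine (contInt _ ((hφ₀c.continuous_deriv htop1).pow 2)).div
      (contInt _ (hφ₀c.continuous.pow 2))
      fun s => (denom_pos s _ hφ₀c.continuous hφ₀ts hφ₀ne).ne'
  obtain ⟨c₀, hc₀⟩ := hK1.exists_bound_of_continuousOn hR₀cont.continuousOn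
  have hΛub : ∀ s, sInf (S s) ≤
      (∫ t in Ioo (-a) a, (deriv (φ₀ : ℝ → ℝ) t) ^ 2 * Real.sqrt (1 + t ^ 2 * σ s ^ 2)) /
      (∫ t in Ioo (-a) a, ((φ₀ : ℝ → ℝ) t) ^ 2 * Real.sqrt (1 + t ^ 2 * σ s ^ 2)) := fun s =>
    csInf_le (Sbdd s) (memS s φ₀ hφ₀c hφ₀cs hφ₀ts hφ₀ne)
  have hΛCbound : ∀ s, ‖sInf (S s) * Cf s‖ ≤ c₀ * Cf s := by
    intro s
    by_cases hs : s ∈ Prod.fst '' tsupport (fun p : ℝ × ℝ => ψ p.1 p.2)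
    · rw [Real.norm_of_nonneg (mul_nonneg (hΛnn s) (hCfnn s))]
      refine mul_le_mul_of_nonneg_right (le_trans (hΛub s) ?_) (hCfnn s)
      exact le_trans (le_abs_self _) (hc₀ s hs)
    · rw [hCf0 s hs, mul_zero, norm_zero, mul_zero]
  have hΛCint : Integrable (fun s => sInf (S s) * Cf s) volume :=
    Integrable.mono' (hCfint.const_mul c₀)
      ((hΛmeas.aestronglyMeasurable).mul hCfcont.aestronglyMeasurable)
      (Filter.Eventually.of_forall hΛCbound)
  -- pointwise comparison with Bf
  have key2' : ∀ s, sInf (S s) * Cf s ≤ Bf s := by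
    intro s
    have hB : Bf s = ∫ t in Ioo (-a) a, Real.sqrt (1 + t ^ 2 * σ s ^ 2) * ‖deriv (ψ s) t‖ ^ 2 := by
      simp only [hBfdef]
      congr 1
      funext t
      rw [hDeq s t]
    rw [hB]; simp only [hCfdef]
    exact key2 s
  have e5 : (∫ s : ℝ, sInf (S s) * Cf s) ≤ ∫ s : ℝ, Bf s :=
    integral_mono hΛCint hBfint key2'
  -- final assembly
  have e1 : (∫ s : ℝ, ∫ t in Ioo (-a) a,
      Real.sqrt (1 + t ^ 2 * σ s ^ 2) * ‖deriv (ψ s) t‖ ^ 2) = ∫ s : ℝ, Bf s := by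
    congr 1
    funext s
    simp only [hBfdef]
    congr 1
    funext t
    rw [hDeq s t]
  have e2 : (∫ s : ℝ, ∫ t in Ioo (-a) a,
      ‖ψ s t‖ ^ 2 * Real.sqrt (1 + t ^ 2 * σ s ^ 2)) = ∫ s : ℝ, Cf s := by
    simp only [hCfdef]
  have e3 : (∫ s : ℝ, ∫ t in Ioo (-a) a,
      lam s * ‖ψ s t‖ ^ 2 * Real.sqrt (1 + t ^ 2 * σ s ^ 2)) = ∫ s : ℝ, lam s * Cf s := by
    congr 1
    funext s
    simp only [hCfdef]
    simp only [mul_assoc]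
    rw [integral_const_mul]
  have e4 : (∫ s : ℝ, lam s * Cf s) = (∫ s : ℝ, sInf (S s) * Cf s) - E * ∫ s : ℝ, Cf s := by
    have heq : (fun s => lam s * Cf s) = fun s => sInf (S s) * Cf s - E * Cf s := by
      funext s
      rw [hlam s]
      simp only [hSdef]
      ring
    rw [heq, integral_sub hΛCint (hCfint.const_mul E), integral_const_mul]
  rw [ge_iff_le, e1, e2, e3, e4]
  linarith [e5]
end

section
/- Let a > 0, let I ⊂ ℝ be a bounded interval of positive length with centre s₀ and half-length b := |I|/2, let χ_I denote the characteristic function of I × (−a,a), and set ρ(s,t) := √(1 + (s − s₀)²). Then for every ψ ∈ C_c^∞(ℝ × (−a,a)), with respect to Lebesgue measure on ℝ × (−a,a): ∫ ρ^{-2}|ψ|² ≤ 16 ∫ |∂_s ψ|² + (2 + 16/b²) ∫ χ_I |ψ|². -/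
open MeasureTheory Real Set
open scoped RealInnerProductSpace

namespace KHLaux

/-- ground state multiplier -/
noncomputable def phi (s₀ b s : ℝ) : ℝ :=
  if |s - s₀| ≤ b then (s₀ - s) / (2 * b ^ 2) else (2 * (s₀ - s))⁻¹

/-- piecewise derivative of `phi` -/
noncomputable def Dphi (s₀ b s : ℝ) : ℝ :=
  if |s - s₀| ≤ b then -(2 * b ^ 2)⁻¹ else (2 * (s - s₀) ^ 2)⁻¹

variable {s₀ b : ℝ}

lemma phi_meas : Measurable (phi s₀ b) := by
  unfold phi
  exact Measurable.ite (measurableSet_le (by fun_prop) measurable_const)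
    (by fun_prop) (by fun_prop)

lemma Dphi_meas : Measurable (Dphi s₀ b) := by
  unfold Dphi
  exact Measurable.ite (measurableSet_le (by fun_prop) measurable_const)
    (by fun_prop) (by fun_prop)

lemma phi_abs (hb : 0 < b) (s : ℝ) : |phi s₀ b s| ≤ (2 * b)⁻¹ := by
  unfold phi
  split_ifs with h
  · have h' : |s₀ - s| ≤ b := by rwa [abs_sub_comm]
    have hpos : (0:ℝ) < 2 * b ^ 2 := by positivity
    rw [abs_div, abs_of_pos hpos, div_le_iff₀ hpos]
    have : (2 * b)⁻¹ * (2 * b ^ 2) = b := by field_simp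
    rw [this]; exact h'
  · have h' : b < |s - s₀| := lt_of_not_ge h
    have h'' : b < |s₀ - s| := by rwa [abs_sub_comm] at h'
    rw [abs_inv, abs_mul, abs_two]
    exact inv_anti₀ (by positivity) (by nlinarith)

lemma Dphi_abs (hb : 0 < b) (s : ℝ) : |Dphi s₀ b s| ≤ (2 * b ^ 2)⁻¹ := by
  unfold Dphi
  split_ifs with h
  · rw [abs_neg, abs_of_pos (by positivity)]
  · have h' : b < |s - s₀| := lt_of_not_ge h
    have h2 : b ^ 2 ≤ (s - s₀) ^ 2 := by nlinarith [abs_nonneg (s - s₀), sq_abs (s - s₀)]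
    rw [abs_of_pos]
    · exact inv_anti₀ (by positivity) (by nlinarith)
    · have : s - s₀ ≠ 0 := by
        intro e; rw [e] at h'; simp at h'; linarith
      positivity

lemma mem_Icc_iff_abs {s : ℝ} : s ∈ Icc (s₀ - b) (s₀ + b) ↔ |s - s₀| ≤ b := by
  rw [mem_Icc, abs_le]; constructor <;> intro h <;> constructor <;> linarith [h.1, h.2]

lemma key (hb : 0 < b) (s : ℝ) :
    (1 + (s - s₀) ^ 2)⁻¹ ≤ 16 * (Dphi s₀ b s - (phi s₀ b s) ^ 2)
      + (1 + 12 / b ^ 2) * (Icc (s₀ - b) (s₀ + b)).indicator (fun _ => (1:ℝ)) s := by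
  by_cases h : |s - s₀| ≤ b
  · rw [indicator_of_mem (mem_Icc_iff_abs.mpr h), phi, Dphi, if_pos h, if_pos h]
    have h1 : (1 + (s - s₀) ^ 2)⁻¹ ≤ 1 := by
      have : (1:ℝ) ≤ 1 + (s - s₀) ^ 2 := by nlinarith [sq_nonneg (s - s₀)]
      simpa using inv_anti₀ one_pos this
    have h2 : (s₀ - s) ^ 2 ≤ b ^ 2 := by nlinarith [sq_abs (s - s₀), abs_nonneg (s - s₀)]
    have hb2 : (0:ℝ) < b ^ 2 := by positivity
    have hb4 : (0:ℝ) < b ^ 4 := by positivity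
    have e1 : ((s₀ - s) / (2 * b ^ 2)) ^ 2 = (s₀ - s) ^ 2 / (4 * b ^ 4) := by
      rw [div_pow]; ring_nf
    rw [e1, mul_one]
    have expand : 16 * (-(2 * b ^ 2)⁻¹ - (s₀ - s) ^ 2 / (4 * b ^ 4)) + (1 + 12 / b ^ 2) - 1
        = 4 * (b ^ 2 - (s₀ - s) ^ 2) / b ^ 4 := by
      field_simp; ring
    have hnn : (0:ℝ) ≤ 4 * (b ^ 2 - (s₀ - s) ^ 2) / b ^ 4 :=
      div_nonneg (by linarith) hb4.le
    linarith
  · rw [indicator_of_notMem (fun hc => h (mem_Icc_iff_abs.mp hc)), phi, Dphi, if_neg h, if_neg h]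
    have h' : b < |s - s₀| := lt_of_not_ge h
    have h0 : s - s₀ ≠ 0 := by
      intro e; rw [e] at h'; simp at h'; linarith
    have h4 : (0:ℝ) < (s - s₀) ^ 2 := by positivity
    have e1 : 16 * ((2 * (s - s₀) ^ 2)⁻¹ - ((2 * (s₀ - s))⁻¹) ^ 2) = 4 * ((s - s₀) ^ 2)⁻¹ := by
      have h0' : s₀ - s ≠ 0 := fun e => h0 (by linarith [e, sub_eq_zero.mp e])
      field_simp
      ring
    rw [mul_zero, add_zero, e1]
    have i1 : (1 + (s - s₀) ^ 2)⁻¹ ≤ ((s - s₀) ^ 2)⁻¹ :=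
      inv_anti₀ h4 (by linarith)
    have i2 : (0:ℝ) ≤ ((s - s₀) ^ 2)⁻¹ := by positivity
    linarith

lemma ev_zero_atTop {f : ℝ → ℂ} (hK : HasCompactSupport f) :
    ∀ᶠ x : ℝ in Filter.atTop, f x = 0 := by
  have h := hasCompactSupport_iff_eventuallyEq.mp hK
  rw [Filter.coclosedCompact_eq_cocompact] at h
  have := h.filter_mono _root_.atTop_le_cocompact
  filter_upwards [this] with x hx using hx

lemma ev_zero_atBot {f : ℝ → ℂ} (hK : HasCompactSupport f) :
    ∀ᶠ x : ℝ in Filter.atBot, f x = 0 := by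
  have h := hasCompactSupport_iff_eventuallyEq.mp hK
  rw [Filter.coclosedCompact_eq_cocompact] at h
  have := h.filter_mono _root_.atBot_le_cocompact
  filter_upwards [this] with x hx using hx

section oneD

variable (s₀ b : ℝ) (f : ℝ → ℂ)

/-- the FTC identity `∫ (Dphi ⬝ ‖f‖² + phi ⬝ (‖f‖²)') = 0`. -/
lemma ftc_identity (hb : 0 < b) (hf : ContDiff ℝ 1 f) (hK : HasCompactSupport f) :
    ∫ s, (Dphi s₀ b s * ‖f s‖ ^ 2 + phi s₀ b s * (2 * ⟪f s, deriv f s⟫)) = 0 := by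
  set c₁ := s₀ - b with hc₁
  set c₂ := s₀ + b with hc₂
  set g : ℝ → ℝ := fun s => ‖f s‖ ^ 2 with hgdef
  set gd : ℝ → ℝ := fun s => 2 * ⟪f s, deriv f s⟫ with hgddef
  have hf_cont : Continuous f := hf.continuous
  have hf'_cont : Continuous (deriv f) := hf.continuous_deriv le_rfl
  have hg_cont : Continuous g := (hf_cont.norm).pow 2
  have hgd_cont : Continuous gd := by
    have : Continuous fun s => ⟪f s, deriv f s⟫ := hf_cont.inner hf'_cont
    exact continuous_const.mul this
  have hKg : HasCompactSupport g := hK.comp_left (g := fun z : ℂ => ‖z‖ ^ 2) (by simp)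
  have hKgd : HasCompactSupport gd := by
    apply hK.mono
    intro s hs
    simp only [Function.mem_support, hgddef] at hs ⊢
    intro h0
    exact hs (by simp [h0])
  have int_g : Integrable g := hg_cont.integrable_of_hasCompactSupport hKg
  have int_gd : Integrable gd := hgd_cont.integrable_of_hasCompactSupport hKgd
  have hg_nonneg : ∀ s, 0 ≤ g s := fun s => by positivity
  -- integrability of the full integrand
  have int_Dg : Integrable (fun s => Dphi s₀ b s * g s) := by
    refine Integrable.mono' (int_g.const_mul ((2 * b ^ 2)⁻¹)) ?_ ?_
    · exact (Dphi_meas.mul hg_cont.measurable).aestronglyMeasurable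
    · refine Filter.Eventually.of_forall fun s => ?_
      rw [norm_mul, Real.norm_eq_abs, Real.norm_eq_abs, abs_of_nonneg (hg_nonneg s)]
      exact mul_le_mul_of_nonneg_right (Dphi_abs hb s) (hg_nonneg s)
  have int_pgd : Integrable (fun s => phi s₀ b s * gd s) := by
    refine Integrable.mono' (int_gd.norm.const_mul ((2 * b)⁻¹)) ?_ ?_
    · exact (phi_meas.mul hgd_cont.measurable).aestronglyMeasurable
    · refine Filter.Eventually.of_forall fun s => ?_
      rw [norm_mul, Real.norm_eq_abs]
      exact mul_le_mul_of_nonneg_right (phi_abs hb s) (norm_nonneg _)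
  have int_H : Integrable (fun s => Dphi s₀ b s * g s + phi s₀ b s * gd s) :=
    int_Dg.add int_pgd
  -- the derivative of `g`
  have hgderiv : ∀ s, HasDerivAt g (gd s) s := by
    intro s
    have hd := (hf.differentiable one_ne_zero s).hasDerivAt
    have h2 := hd.inner ℝ hd
    have h3 : (fun t => ⟪f t, f t⟫) = g := funext fun t => real_inner_self_eq_norm_sq (f t)
    rw [h3] at h2
    refine h2.congr_deriv ?_
    rw [real_inner_comm (f s) (deriv f s)]
    simp [hgddef]; ring
  -- derivative of the outer branch Φ
  have hΦderiv : ∀ x : ℝ, x ≠ s₀ →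
      HasDerivAt (fun s => (2 * (s₀ - s))⁻¹ * g s)
        ((2 * (x - s₀) ^ 2)⁻¹ * g x + (2 * (s₀ - x))⁻¹ * gd x) x := by
    intro x hx
    have hu : HasDerivAt (fun s : ℝ => 2 * (s₀ - s)) (-2) x := by
      simpa using ((hasDerivAt_id x).const_sub s₀).const_mul (2:ℝ)
    have hne : 2 * (s₀ - x) ≠ 0 := by
      intro h0
      apply hx
      have : s₀ - x = 0 := by linarith [mul_eq_zero.mp h0]
      linarith
    have hinv := hu.inv hne
    have hval : -(-2) / (2 * (s₀ - x)) ^ 2 = (2 * (x - s₀) ^ 2)⁻¹ := by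
      have : s₀ - x ≠ 0 := fun h0 => hne (by rw [h0, mul_zero])
      have hx0 : x - s₀ ≠ 0 := fun h0 => this (by linarith [sub_eq_zero.mp h0])
      field_simp
      ring
    rw [hval] at hinv
    exact hinv.mul (hgderiv x)
  -- derivative of the middle branch Φm
  have hΦmderiv : ∀ x : ℝ,
      HasDerivAt (fun s => (s₀ - s) / (2 * b ^ 2) * g s)
        (-(2 * b ^ 2)⁻¹ * g x + (s₀ - x) / (2 * b ^ 2) * gd x) x := by
    intro x
    have hu : HasDerivAt (fun s : ℝ => (s₀ - s) / (2 * b ^ 2)) (-(2 * b ^ 2)⁻¹) x := by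
      have := ((hasDerivAt_id x).const_sub s₀).div_const (2 * b ^ 2)
      simpa [neg_div, one_div] using this
    exact hu.mul (hgderiv x)
  -- tendsto of Φ at ±∞
  have hev_top : ∀ᶠ x : ℝ in Filter.atTop, (2 * (s₀ - x))⁻¹ * g x = 0 := by
    filter_upwards [ev_zero_atTop hK] with x hx
    simp [hgdef, hx]
  have hev_bot : ∀ᶠ x : ℝ in Filter.atBot, (2 * (s₀ - x))⁻¹ * g x = 0 := by
    filter_upwards [ev_zero_atBot hK] with x hx
    simp [hgdef, hx]
  have htend_top : Filter.Tendsto (fun s => (2 * (s₀ - s))⁻¹ * g s) Filter.atTop (nhds 0) := by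
    refine Filter.Tendsto.congr' ?_ tendsto_const_nhds
    filter_upwards [hev_top] with x hx using hx.symm
  have htend_bot : Filter.Tendsto (fun s => (2 * (s₀ - s))⁻¹ * g s) Filter.atBot (nhds 0) := by
    refine Filter.Tendsto.congr' ?_ tendsto_const_nhds
    filter_upwards [hev_bot] with x hx using hx.symm
  -- equality of branch integrands with H on the corresponding pieces
  have eqOn_right : EqOn (fun s => Dphi s₀ b s * g s + phi s₀ b s * gd s)
      (fun x => (2 * (x - s₀) ^ 2)⁻¹ * g x + (2 * (s₀ - x))⁻¹ * gd x) (Ioi c₂) := by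
    intro x hx
    have hxgt : b < x - s₀ := by
      have : s₀ + b < x := hx
      linarith
    have hx' : ¬ |x - s₀| ≤ b := not_le.mpr (hxgt.trans_le (le_abs_self _))
    simp only [Dphi, phi, if_neg hx']
  have eqOn_mid : EqOn (fun s => Dphi s₀ b s * g s + phi s₀ b s * gd s)
      (fun x => -(2 * b ^ 2)⁻¹ * g x + (s₀ - x) / (2 * b ^ 2) * gd x) (Ioc c₁ c₂) := by
    intro x hx
    have hx' : |x - s₀| ≤ b := by
      rw [abs_le]
      constructor
      · have : c₁ < x := hx.1
        simp only [hc₁] at this; linarith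
      · have : x ≤ c₂ := hx.2
        simp only [hc₂] at this; linarith
    simp only [Dphi, phi, if_pos hx']
  have ae_left : ∀ᵐ x ∂(volume.restrict (Iic c₁)),
      (fun s => Dphi s₀ b s * g s + phi s₀ b s * gd s) x
        = (fun x => (2 * (x - s₀) ^ 2)⁻¹ * g x + (2 * (s₀ - x))⁻¹ * gd x) x := by
    rw [ae_restrict_iff' measurableSet_Iic]
    rw [ae_iff]
    refine measure_mono_null ?_ (measure_singleton c₁)
    intro x hx
    simp only [mem_setOf_eq, not_forall, _root_.not_imp] at hx
    obtain ⟨hx1, hx2⟩ := hx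
    by_contra hne
    apply hx2
    have hxlt : x < c₁ := lt_of_le_of_ne hx1 (by simpa using hne)
    have hxgt : b < s₀ - x := by simp only [hc₁] at hxlt; linarith
    have hx' : ¬ |x - s₀| ≤ b := by
      rw [not_le, abs_sub_comm]
      exact hxgt.trans_le (le_abs_self _)
    simp only [Dphi, phi, if_neg hx']
  have hc₁₂ : c₁ ≤ c₂ := by simp only [hc₁, hc₂]; linarith
  -- right integral
  have hR : ∫ x in Ioi c₂, (Dphi s₀ b x * g x + phi s₀ b x * gd x)
      = 0 - (2 * (s₀ - c₂))⁻¹ * g c₂ := by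
    rw [setIntegral_congr_fun measurableSet_Ioi eqOn_right]
    refine integral_Ioi_of_hasDerivAt_of_tendsto' ?_ ?_ htend_top
    · intro x hx
      refine hΦderiv x ?_
      have : c₂ ≤ x := hx
      simp only [hc₂] at this
      intro h0; rw [h0] at this; linarith
    · exact ((int_H.integrableOn).congr_fun eqOn_right measurableSet_Ioi)
  -- left integral
  have hL : ∫ x in Iic c₁, (Dphi s₀ b x * g x + phi s₀ b x * gd x)
      = (2 * (s₀ - c₁))⁻¹ * g c₁ - 0 := by
    rw [integral_congr_ae ae_left]
    refine integral_Iic_of_hasDerivAt_of_tendsto' ?_ ?_ htend_bot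
    · intro x hx
      refine hΦderiv x ?_
      have : x ≤ c₁ := hx
      simp only [hc₁] at this
      intro h0; rw [h0] at this; linarith
    · exact (int_H.integrableOn).congr_fun_ae ae_left
  -- middle integral
  have hM : ∫ x in Ioc c₁ c₂, (Dphi s₀ b x * g x + phi s₀ b x * gd x)
      = (s₀ - c₂) / (2 * b ^ 2) * g c₂ - (s₀ - c₁) / (2 * b ^ 2) * g c₁ := by
    rw [setIntegral_congr_fun measurableSet_Ioc eqOn_mid]
    rw [← intervalIntegral.integral_of_le hc₁₂]
    exact intervalIntegral.integral_eq_sub_of_hasDerivAt (fun x _ => hΦmderiv x)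
      (((continuous_const.mul hg_cont).add
        ((continuous_const.sub continuous_id').div_const _ |>.mul hgd_cont)).intervalIntegrable _ _)
  -- splitting
  have split2 : ∫ x in Ioi c₁, (Dphi s₀ b x * g x + phi s₀ b x * gd x)
      = (∫ x in Ioc c₁ c₂, (Dphi s₀ b x * g x + phi s₀ b x * gd x))
        + ∫ x in Ioi c₂, (Dphi s₀ b x * g x + phi s₀ b x * gd x) := by
    rw [← setIntegral_union (Ioc_disjoint_Ioi le_rfl) measurableSet_Ioi
      int_H.integrableOn int_H.integrableOn, Ioc_union_Ioi_eq_Ioi hc₁₂]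
  have split1 : ∫ x, (Dphi s₀ b x * g x + phi s₀ b x * gd x)
      = (∫ x in Iic c₁, (Dphi s₀ b x * g x + phi s₀ b x * gd x))
        + ∫ x in Ioi c₁, (Dphi s₀ b x * g x + phi s₀ b x * gd x) :=
    (intervalIntegral.integral_Iic_add_Ioi int_H.integrableOn int_H.integrableOn).symm
  -- boundary values match
  have hbv₁ : (2 * (s₀ - c₁))⁻¹ * g c₁ = (s₀ - c₁) / (2 * b ^ 2) * g c₁ := by
    have h1 : s₀ - c₁ = b := by simp only [hc₁]; ring
    rw [h1]
    congr 1
    field_simp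
  have hbv₂ : (2 * (s₀ - c₂))⁻¹ * g c₂ = (s₀ - c₂) / (2 * b ^ 2) * g c₂ := by
    have h2 : s₀ - c₂ = -b := by simp only [hc₂]; ring
    rw [h2]
    congr 1
    field_simp
  rw [split1, split2, hL, hM, hR]
  linarith [hbv₁, hbv₂]

lemma oneD_hardy (hb : 0 < b) (hf : ContDiff ℝ 1 f) (hK : HasCompactSupport f) :
    (∫ s, (1 + (s - s₀) ^ 2)⁻¹ * ‖f s‖ ^ 2) ≤
      16 * (∫ s, ‖deriv f s‖ ^ 2)
        + (2 + 16 / b ^ 2) * ∫ s in Icc (s₀ - b) (s₀ + b), ‖f s‖ ^ 2 := by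
  set g : ℝ → ℝ := fun s => ‖f s‖ ^ 2 with hgdef
  set gd : ℝ → ℝ := fun s => 2 * ⟪f s, deriv f s⟫ with hgddef
  have hf_cont : Continuous f := hf.continuous
  have hf'_cont : Continuous (deriv f) := hf.continuous_deriv le_rfl
  have hg_cont : Continuous g := (hf_cont.norm).pow 2
  have hgd_cont : Continuous gd := by
    have : Continuous fun s => ⟪f s, deriv f s⟫ := hf_cont.inner hf'_cont
    exact continuous_const.mul this
  have hKg : HasCompactSupport g := hK.comp_left (g := fun z : ℂ => ‖z‖ ^ 2) (by simp)
  have hKgd : HasCompactSupport gd := by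
    apply hK.mono
    intro s hs
    simp only [Function.mem_support, hgddef] at hs ⊢
    intro h0
    exact hs (by simp [h0])
  have int_g : Integrable g := hg_cont.integrable_of_hasCompactSupport hKg
  have int_gd : Integrable gd := hgd_cont.integrable_of_hasCompactSupport hKgd
  have hg_nonneg : ∀ s, 0 ≤ g s := fun s => by positivity
  have int_Dg : Integrable (fun s => Dphi s₀ b s * g s) := by
    refine Integrable.mono' (int_g.const_mul ((2 * b ^ 2)⁻¹)) ?_ ?_
    · exact (Dphi_meas.mul hg_cont.measurable).aestronglyMeasurable
    · refine Filter.Eventually.of_forall fun s => ?_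
      rw [norm_mul, Real.norm_eq_abs, Real.norm_eq_abs, abs_of_nonneg (hg_nonneg s)]
      exact mul_le_mul_of_nonneg_right (Dphi_abs hb s) (hg_nonneg s)
  have int_pgd : Integrable (fun s => phi s₀ b s * gd s) := by
    refine Integrable.mono' (int_gd.norm.const_mul ((2 * b)⁻¹)) ?_ ?_
    · exact (phi_meas.mul hgd_cont.measurable).aestronglyMeasurable
    · refine Filter.Eventually.of_forall fun s => ?_
      rw [norm_mul, Real.norm_eq_abs]
      exact mul_le_mul_of_nonneg_right (phi_abs hb s) (norm_nonneg _)
  have int_p2g : Integrable (fun s => phi s₀ b s ^ 2 * g s) := by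
    refine Integrable.mono' (int_g.const_mul (((2 * b)⁻¹) ^ 2)) ?_ ?_
    · exact ((phi_meas.pow_const 2).mul hg_cont.measurable).aestronglyMeasurable
    · refine Filter.Eventually.of_forall fun s => ?_
      rw [norm_mul, Real.norm_eq_abs, Real.norm_eq_abs, abs_of_nonneg (hg_nonneg s)]
      refine mul_le_mul_of_nonneg_right ?_ (hg_nonneg s)
      rw [abs_pow]
      exact pow_le_pow_left₀ (abs_nonneg _) (phi_abs hb s) 2
  have int_f'sq : Integrable (fun s => ‖deriv f s‖ ^ 2) :=
    by
      have h : HasCompactSupport ((fun z : ℂ => ‖z‖ ^ 2) ∘ deriv f) := hK.deriv.comp_left (by simp)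
      rw [Function.comp_def] at h
      exact ((hf'_cont.norm).pow 2).integrable_of_hasCompactSupport h
  have int_wg : Integrable (fun s => (1 + (s - s₀) ^ 2)⁻¹ * g s) := by
    have hw_cont : Continuous fun s : ℝ => (1 + (s - s₀) ^ 2)⁻¹ := by
      refine Continuous.inv₀ (by continuity) fun s => ?_
      positivity
    refine (hw_cont.mul hg_cont).integrable_of_hasCompactSupport ?_
    apply hKg.mono
    intro s hs
    simp only [Function.mem_support] at hs ⊢
    intro h0
    exact hs (by rw [Pi.mul_apply, h0, mul_zero])
  have int_ind : Integrable ((Icc (s₀ - b) (s₀ + b)).indicator g) :=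
    int_g.indicator measurableSet_Icc
  have int_R : Integrable (fun s => 16 * (Dphi s₀ b s * g s) - 16 * (phi s₀ b s ^ 2 * g s)
      + (1 + 12 / b ^ 2) * (Icc (s₀ - b) (s₀ + b)).indicator g s) :=
    ((int_Dg.const_mul 16).sub (int_p2g.const_mul 16)).add (int_ind.const_mul _)
  have h1 : (∫ s, (1 + (s - s₀) ^ 2)⁻¹ * g s) ≤ ∫ s,
      (16 * (Dphi s₀ b s * g s) - 16 * (phi s₀ b s ^ 2 * g s)
        + (1 + 12 / b ^ 2) * (Icc (s₀ - b) (s₀ + b)).indicator g s) := by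
    refine integral_mono int_wg int_R fun s => ?_
    have hkey := mul_le_mul_of_nonneg_right (key (s₀ := s₀) hb s) (hg_nonneg s)
    calc (1 + (s - s₀) ^ 2)⁻¹ * g s
        ≤ (16 * (Dphi s₀ b s - phi s₀ b s ^ 2)
            + (1 + 12 / b ^ 2) * (Icc (s₀ - b) (s₀ + b)).indicator (fun _ => (1:ℝ)) s) * g s :=
          hkey
      _ = 16 * (Dphi s₀ b s * g s) - 16 * (phi s₀ b s ^ 2 * g s)
          + (1 + 12 / b ^ 2) * (Icc (s₀ - b) (s₀ + b)).indicator g s := by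
          by_cases hm : s ∈ Icc (s₀ - b) (s₀ + b)
          · rw [indicator_of_mem hm, indicator_of_mem hm]; ring
          · rw [indicator_of_notMem hm, indicator_of_notMem hm]; ring
  have h2 : (∫ s, (16 * (Dphi s₀ b s * g s) - 16 * (phi s₀ b s ^ 2 * g s)
        + (1 + 12 / b ^ 2) * (Icc (s₀ - b) (s₀ + b)).indicator g s))
      = 16 * (∫ s, Dphi s₀ b s * g s) - 16 * (∫ s, phi s₀ b s ^ 2 * g s)
        + (1 + 12 / b ^ 2) * ∫ s in Icc (s₀ - b) (s₀ + b), g s := by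
    have intA : Integrable (fun s => 16 * (Dphi s₀ b s * g s) - 16 * (phi s₀ b s ^ 2 * g s)) :=
      (int_Dg.const_mul 16).sub (int_p2g.const_mul 16)
    have intB : Integrable
        (fun s => (1 + 12 / b ^ 2) * (Icc (s₀ - b) (s₀ + b)).indicator g s) :=
      int_ind.const_mul _
    have intC : Integrable (fun s => 16 * (Dphi s₀ b s * g s)) := int_Dg.const_mul 16
    have intD : Integrable (fun s => 16 * (phi s₀ b s ^ 2 * g s)) := int_p2g.const_mul 16
    rw [integral_add intA intB, integral_sub intC intD,
      integral_const_mul, integral_const_mul, integral_const_mul,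
      integral_indicator measurableSet_Icc]
  have hftc : (∫ s, Dphi s₀ b s * g s) + (∫ s, phi s₀ b s * gd s) = 0 := by
    rw [← integral_add int_Dg int_pgd]
    exact ftc_identity s₀ b f hb hf hK
  have hexp : ∀ s, ‖deriv f s + phi s₀ b s • f s‖ ^ 2
      = ‖deriv f s‖ ^ 2 + phi s₀ b s * gd s + phi s₀ b s ^ 2 * g s := by
    intro s
    rw [norm_add_sq_real, real_inner_smul_right, norm_smul, Real.norm_eq_abs, mul_pow, sq_abs,
      real_inner_comm (f s) (deriv f s)]
    simp only [hgddef, hgdef]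
    ring
  have hpos : 0 ≤ (∫ s, ‖deriv f s‖ ^ 2) + (∫ s, phi s₀ b s * gd s)
      + ∫ s, phi s₀ b s ^ 2 * g s := by
    have hnn : 0 ≤ ∫ s, ‖deriv f s + phi s₀ b s • f s‖ ^ 2 :=
      integral_nonneg fun s => by positivity
    calc (0:ℝ) ≤ ∫ s, ‖deriv f s + phi s₀ b s • f s‖ ^ 2 := hnn
      _ = ∫ s, (‖deriv f s‖ ^ 2 + phi s₀ b s * gd s + phi s₀ b s ^ 2 * g s) := by
          simp only [hexp]
      _ = (∫ s, ‖deriv f s‖ ^ 2) + (∫ s, phi s₀ b s * gd s)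
          + ∫ s, phi s₀ b s ^ 2 * g s := by
          have intE : Integrable (fun s => ‖deriv f s‖ ^ 2 + phi s₀ b s * gd s) :=
            int_f'sq.add int_pgd
          rw [integral_add intE int_p2g, integral_add int_f'sq int_pgd]
  have hIccnn : 0 ≤ ∫ s in Icc (s₀ - b) (s₀ + b), g s :=
    setIntegral_nonneg measurableSet_Icc fun s _ => hg_nonneg s
  have hcc : (1 + 12 / b ^ 2) ≤ 2 + 16 / b ^ 2 := by
    have h4 : (0:ℝ) ≤ 4 / b ^ 2 := by positivity
    have h12 : 12 / b ^ 2 + 4 / b ^ 2 = 16 / b ^ 2 := by ring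
    linarith
  have hmul := mul_le_mul_of_nonneg_right hcc hIccnn
  linarith [h1, h2, hftc, hpos, hmul]

end oneD

end KHLaux

/-- **Lemma (kinetic-energy Hardy estimate, Lebesgue version).** For a bounded
interval `I = [s₀ - b, s₀ + b]` with centre `s₀` and half-length `b > 0`, and
every `ψ ∈ C_c^∞(ℝ × (-a,a))`, with respect to Lebesgue measure on the strip:
`∫ ρ⁻²|ψ|² ≤ 16 ∫ |∂_s ψ|² + (2 + 16/b²) ∫ χ_I |ψ|²`,
where `ρ(s,t) = √(1+(s-s₀)²)`. -/
theorem kinetic_hardy_lebesgue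
    (a : ℝ) (ha : 0 < a) (s₀ b : ℝ) (hb : 0 < b) :
    ∀ ψ : ℝ → ℝ → ℂ,
      ContDiff ℝ (⊤ : ℕ∞) (fun p : ℝ × ℝ => ψ p.1 p.2) →
      HasCompactSupport (fun p : ℝ × ℝ => ψ p.1 p.2) →
      tsupport (fun p : ℝ × ℝ => ψ p.1 p.2) ⊆ univ ×ˢ Ioo (-a) a →
      (∫ s : ℝ, ∫ t in Ioo (-a) a, (1 + (s - s₀) ^ 2)⁻¹ * ‖ψ s t‖ ^ 2) ≤
        16 * (∫ s : ℝ, ∫ t in Ioo (-a) a, ‖deriv (fun x => ψ x t) s‖ ^ 2) +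
          (2 + 16 / b ^ 2) *
            (∫ s in Icc (s₀ - b) (s₀ + b), ∫ t in Ioo (-a) a, ‖ψ s t‖ ^ 2) := by
  intro ψ hC hK _
  classical
  set Ψ : ℝ × ℝ → ℂ := fun p => ψ p.1 p.2 with hΨdef
  have hC1 : ContDiff ℝ 1 Ψ := hC.of_le (by exact_mod_cast le_top)
  have hcontΨ : Continuous Ψ := hC1.continuous
  -- partial derivative in the first variable as an evaluation of the full derivative
  have hder : ∀ t s : ℝ, HasDerivAt (fun x => ψ x t) (fderiv ℝ Ψ (s, t) (1, 0)) s := by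
    intro t s
    have hF : HasFDerivAt Ψ (fderiv ℝ Ψ (s, t)) (s, t) :=
      (hC1.differentiable one_ne_zero (s, t)).hasFDerivAt
    have hl : HasDerivAt (fun x : ℝ => ((x, t) : ℝ × ℝ)) ((1 : ℝ), (0 : ℝ)) s :=
      HasDerivAt.prodMk (hasDerivAt_id s) (hasDerivAt_const s t)
    exact hF.comp_hasDerivAt s hl
  have hderiv_eq : ∀ t s : ℝ, deriv (fun x => ψ x t) s = ‖fderiv ℝ Ψ (s, t) (1, 0)‖ ^ 2 → True :=
    fun _ _ _ => trivial
  clear hderiv_eq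
  have hde : ∀ t s : ℝ, deriv (fun x => ψ x t) s = fderiv ℝ Ψ (s, t) (1, 0) :=
    fun t s => (hder t s).deriv
  simp only [hde]
  -- the three integrands as functions on the plane
  set A : ℝ → ℝ → ℝ := fun s t => (1 + (s - s₀) ^ 2)⁻¹ * ‖ψ s t‖ ^ 2 with hA
  set B : ℝ → ℝ → ℝ := fun s t => ‖fderiv ℝ Ψ (s, t) (1, 0)‖ ^ 2 with hB
  set C : ℝ → ℝ → ℝ := fun s t => ‖ψ s t‖ ^ 2 with hC2
  have intA2 : Integrable (fun p : ℝ × ℝ => A p.1 p.2) := by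
    refine Continuous.integrable_of_hasCompactSupport ?_ ?_
    · exact (Continuous.inv₀ (by fun_prop) (fun p => by positivity)).mul ((hcontΨ.norm).pow 2)
    · apply hK.mono
      intro p hp
      simp only [Function.mem_support] at hp ⊢
      intro h0
      apply hp
      simp only [hA]
      rw [show ψ p.1 p.2 = Ψ p from rfl, h0]
      simp
  have intB2 : Integrable (fun p : ℝ × ℝ => B p.1 p.2) := by
    have hcont : Continuous fun p : ℝ × ℝ => ‖fderiv ℝ Ψ p (1, 0)‖ ^ 2 :=
      (((hC.continuous_fderiv (by simp)).clm_apply continuous_const).norm).pow 2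
    have hsupp : HasCompactSupport fun p : ℝ × ℝ => ‖fderiv ℝ Ψ p (1, 0)‖ ^ 2 :=
      (hK.fderiv_apply ℝ ((1 : ℝ), (0 : ℝ))).comp_left (g := fun z : ℂ => ‖z‖ ^ 2) (by simp)
    exact hcont.integrable_of_hasCompactSupport hsupp
  have intC2 : Integrable (fun p : ℝ × ℝ => C p.1 p.2) := by
    refine Continuous.integrable_of_hasCompactSupport ((hcontΨ.norm).pow 2) ?_
    exact hK.comp_left (g := fun z : ℂ => ‖z‖ ^ 2) (by simp)
  -- restricted product measures
  have hprod1 : (volume : Measure ℝ).prod (volume.restrict (Ioo (-a) a))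
      = ((volume : Measure ℝ).prod (volume : Measure ℝ)).restrict (univ ×ˢ Ioo (-a) a) := by
    rw [← Measure.prod_restrict, Measure.restrict_univ]
  have hprod2 : ((volume : Measure ℝ).restrict (Icc (s₀ - b) (s₀ + b))).prod
        (volume.restrict (Ioo (-a) a))
      = ((volume : Measure ℝ).prod (volume : Measure ℝ)).restrict
          (Icc (s₀ - b) (s₀ + b) ×ˢ Ioo (-a) a) :=
    Measure.prod_restrict _ _
  have hvol : ((volume : Measure ℝ).prod (volume : Measure ℝ)) = (volume : Measure (ℝ × ℝ)) :=
    (MeasureTheory.Measure.volume_eq_prod ℝ ℝ).symm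
  have intA : Integrable (Function.uncurry A)
      ((volume : Measure ℝ).prod (volume.restrict (Ioo (-a) a))) := by
    rw [hprod1, hvol]
    exact intA2.restrict
  have intB : Integrable (Function.uncurry B)
      ((volume : Measure ℝ).prod (volume.restrict (Ioo (-a) a))) := by
    rw [hprod1, hvol]
    exact intB2.restrict
  have intC : Integrable (Function.uncurry C)
      (((volume : Measure ℝ).restrict (Icc (s₀ - b) (s₀ + b))).prod
        (volume.restrict (Ioo (-a) a))) := by
    rw [hprod2, hvol]
    exact intC2.restrict
  -- Fubini swaps
  have swapA := integral_integral_swap intA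
  have swapB := integral_integral_swap intB
  have swapC := integral_integral_swap intC
  -- the one-dimensional inequality, for every t
  have h1d : ∀ t : ℝ, (∫ s, A s t) ≤
      16 * (∫ s, B s t) + (2 + 16 / b ^ 2) * ∫ s in Icc (s₀ - b) (s₀ + b), C s t := by
    intro t
    have hf1 : ContDiff ℝ 1 (fun s => ψ s t) := hC1.comp (contDiff_id.prodMk contDiff_const)
    have hK1 : HasCompactSupport fun s => ψ s t := by
      refine HasCompactSupport.intro (hK.isCompact.image continuous_fst) ?_
      intro s hs
      have hnm : (s, t) ∉ tsupport Ψ := fun hm => hs ⟨(s, t), hm, rfl⟩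
      have h0 : Ψ (s, t) = 0 := image_eq_zero_of_notMem_tsupport hnm
      exact h0
    have h := KHLaux.oneD_hardy s₀ b (fun s => ψ s t) hb hf1 hK1
    simpa only [hde t] using h
  -- integrate the inequality in t
  have mA : Integrable (fun t => ∫ s, A s t) (volume.restrict (Ioo (-a) a)) :=
    intA.integral_prod_right
  have mB : Integrable (fun t => ∫ s, B s t) (volume.restrict (Ioo (-a) a)) :=
    intB.integral_prod_right
  have mC : Integrable (fun t => ∫ s in Icc (s₀ - b) (s₀ + b), C s t)
      (volume.restrict (Ioo (-a) a)) :=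
    intC.integral_prod_right
  have hmono : (∫ t in Ioo (-a) a, ∫ s, A s t) ≤
      ∫ t in Ioo (-a) a,
        (16 * (∫ s, B s t) + (2 + 16 / b ^ 2) * ∫ s in Icc (s₀ - b) (s₀ + b), C s t) :=
    integral_mono mA ((mB.const_mul 16).add (mC.const_mul (2 + 16 / b ^ 2))) h1d
  have hsplit : (∫ t in Ioo (-a) a,
        (16 * (∫ s, B s t) + (2 + 16 / b ^ 2) * ∫ s in Icc (s₀ - b) (s₀ + b), C s t))
      = 16 * (∫ t in Ioo (-a) a, ∫ s, B s t)
        + (2 + 16 / b ^ 2) * ∫ t in Ioo (-a) a, ∫ s in Icc (s₀ - b) (s₀ + b), C s t := by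
    have m1 : Integrable (fun t => 16 * ∫ s, B s t) (volume.restrict (Ioo (-a) a)) :=
      mB.const_mul 16
    have m2 : Integrable (fun t => (2 + 16 / b ^ 2) * ∫ s in Icc (s₀ - b) (s₀ + b), C s t)
        (volume.restrict (Ioo (-a) a)) :=
      mC.const_mul _
    rw [integral_add m1 m2, integral_const_mul, integral_const_mul]
  calc (∫ s : ℝ, ∫ t in Ioo (-a) a, A s t)
      = ∫ t in Ioo (-a) a, ∫ s, A s t := swapA
    _ ≤ ∫ t in Ioo (-a) a,
          (16 * (∫ s, B s t) + (2 + 16 / b ^ 2) * ∫ s in Icc (s₀ - b) (s₀ + b), C s t) := hmono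
    _ = 16 * (∫ t in Ioo (-a) a, ∫ s, B s t)
          + (2 + 16 / b ^ 2) * ∫ t in Ioo (-a) a, ∫ s in Icc (s₀ - b) (s₀ + b), C s t := hsplit
    _ = 16 * (∫ s : ℝ, ∫ t in Ioo (-a) a, B s t)
          + (2 + 16 / b ^ 2) *
            ∫ s in Icc (s₀ - b) (s₀ + b), ∫ t in Ioo (-a) a, C s t := by
        rw [← swapB, ← swapC]
end

section
/- Let a > 0, let σ : ℝ → ℝ be bounded and continuous, let s₀ ∈ ℝ, let c > 0 and E₁ := π²/(2a)². Define ε(s) := ε₀/(1 + s²), f₋(s) := √(1 − aε(s)(2 + aε(s))/(1 + a²‖σ‖_∞²)), f₊(s) := √(1 + aε(s)(2 + aε(s))), and w(s,t) := c·min{f₊(0)^{-1}, f₋(0)}/(1 + (s − s₀)²) − E₁·(f₊(s) − f₋(s)). Then there exists ε* > 0 such that for all ε₀ ∈ [0, ε*], w(s,t) > 0 for every (s,t) ∈ ℝ × (−a,a). -/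
open MeasureTheory Real Set

lemma prod_half_aux (u : ℝ) (h0 : 0 ≤ u) (h : u ≤ 1/6) : u * (2 + u) ≤ 1/2 := by
  nlinarith

lemma prod_three_aux (u : ℝ) (h0 : 0 ≤ u) (h : u ≤ 1/6) : u * (2 + u) ≤ 3 * u := by
  nlinarith

lemma denom_aux (s s₀ : ℝ) : 1 + (s - s₀) ^ 2 ≤ 2 * (1 + s₀ ^ 2) * (1 + s ^ 2) := by
  nlinarith [sq_nonneg (s + s₀), sq_nonneg (s * s₀)]

lemma sqrt_one_add_le_aux (x : ℝ) (hx : 0 ≤ x) : Real.sqrt (1 + x) ≤ 1 + x / 2 := by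
  have h : (1 + x) ≤ (1 + x / 2) ^ 2 := by nlinarith
  calc Real.sqrt (1 + x) ≤ Real.sqrt ((1 + x / 2) ^ 2) := Real.sqrt_le_sqrt h
    _ = 1 + x / 2 := Real.sqrt_sq (by linarith)

lemma one_sub_le_sqrt_aux (y : ℝ) (h0 : 0 ≤ y) (h1 : y ≤ 1) :
    1 - y ≤ Real.sqrt (1 - y) := by
  rw [Real.le_sqrt (by linarith) (by linarith)]
  nlinarith

/-- **Positivity of the weight `w` for small `ε₀`.** With
`ε(s) = ε₀/(1+s²)`, `f₋(s) = √(1 - aε(s)(2+aε(s))/(1+a²‖σ‖_∞²))`,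
`f₊(s) = √(1 + aε(s)(2+aε(s)))` and
`w(s,t) = c·min{f₊(0)⁻¹, f₋(0)}/(1+(s-s₀)²) - E₁(f₊(s) - f₋(s))`,
there exists `ε* > 0` such that for all `ε₀ ∈ [0, ε*]` the weight `w` is
positive everywhere on `ℝ × (-a,a)`. -/
theorem weight_positive_for_small_eps
    (a : ℝ) (ha : 0 < a)
    (σ : ℝ → ℝ) (hσcont : Continuous σ) (hσbdd : ∃ M, ∀ s, |σ s| ≤ M)
    (s₀ : ℝ) (c : ℝ) (hc : 0 < c) :
    ∃ εstar > (0:ℝ), ∀ ε₀ : ℝ, 0 ≤ ε₀ → ε₀ ≤ εstar →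
      ∀ s : ℝ, ∀ t ∈ Ioo (-a) a,
        0 <
          c * min
              (Real.sqrt (1 + a * ε₀ * (2 + a * ε₀)))⁻¹
              (Real.sqrt (1 - a * ε₀ * (2 + a * ε₀) /
                (1 + a ^ 2 * (⨆ x, |σ x|) ^ 2))) / (1 + (s - s₀) ^ 2) -
            (π ^ 2 / (2 * a) ^ 2) *
              (Real.sqrt (1 + a * (ε₀ / (1 + s ^ 2)) *
                  (2 + a * (ε₀ / (1 + s ^ 2)))) -
                Real.sqrt (1 - a * (ε₀ / (1 + s ^ 2)) *
                    (2 + a * (ε₀ / (1 + s ^ 2))) /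
                  (1 + a ^ 2 * (⨆ x, |σ x|) ^ 2))) := by
  set E : ℝ := π ^ 2 / (2 * a) ^ 2 with hEdef
  have hE : 0 < E := by rw [hEdef]; positivity
  clear_value E
  set S : ℝ := ⨆ x, |σ x| with hSdef
  clear_value S
  set D : ℝ := 1 + a ^ 2 * S ^ 2 with hDdef
  have hD : 1 ≤ D := by rw [hDdef]; nlinarith [sq_nonneg (a * S)]
  clear_value D
  have hD0 : 0 < D := by linarith
  set K : ℝ := 1 + s₀ ^ 2 with hKdef
  have hK : 1 ≤ K := by rw [hKdef]; nlinarith [sq_nonneg s₀]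
  have hK0 : 0 < K := by linarith
  refine ⟨min (1 / (6 * a)) (c / (19 * a * E * K)), lt_min (by positivity) (by positivity),
    ?_⟩
  intro ε₀ hε₀ hε₀le s t _
  -- basic bounds from the choice of εstar
  have haε₀ : a * ε₀ ≤ 1 / 6 := by
    have h1 : ε₀ ≤ 1 / (6 * a) := le_trans hε₀le (min_le_left _ _)
    have h2 := (le_div_iff₀ (by positivity : (0:ℝ) < 6 * a)).mp h1
    nlinarith
  have hεc : ε₀ * (19 * a * E * K) ≤ c := by
    have h1 : ε₀ ≤ c / (19 * a * E * K) := le_trans hε₀le (min_le_right _ _)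
    exact (le_div_iff₀ (by positivity)).mp h1
  set Q : ℝ := 1 + s ^ 2 with hQdef
  have hQ : 1 ≤ Q := by rw [hQdef]; nlinarith [sq_nonneg s]
  have hQ0 : 0 < Q := by linarith
  set e : ℝ := ε₀ / Q with hedef
  have he0 : 0 ≤ e := by rw [hedef]; positivity
  have hee : e ≤ ε₀ := hedef ▸ div_le_self hε₀ hQ
  have heQ : e * Q = ε₀ := by rw [hedef]; exact div_mul_cancel₀ ε₀ (ne_of_gt hQ0)
  clear_value e
  have hae : a * e ≤ 1 / 6 := le_trans (mul_le_mul_of_nonneg_left hee ha.le) haε₀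
  have hae0 : 0 ≤ a * e := mul_nonneg ha.le he0
  set x : ℝ := a * e * (2 + a * e) with hxdef
  have hx0 : 0 ≤ x := by
    rw [hxdef]; exact mul_nonneg hae0 (by linarith)
  have hx_half : x ≤ 1 / 2 := by rw [hxdef]; exact prod_half_aux _ hae0 hae
  have hx_le : x ≤ 3 * (a * e) := by rw [hxdef]; exact prod_three_aux _ hae0 hae
  have hxQ : x * Q ≤ 3 * (a * ε₀) := by
    calc x * Q ≤ (3 * (a * e)) * Q := mul_le_mul_of_nonneg_right hx_le hQ0.le
      _ = 3 * a * (e * Q) := by ring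
      _ = 3 * (a * ε₀) := by rw [heQ]; ring
  clear_value x
  have haε0 : 0 ≤ a * ε₀ := mul_nonneg ha.le hε₀
  set x₀ : ℝ := a * ε₀ * (2 + a * ε₀) with hx₀def
  have hx₀0 : 0 ≤ x₀ := by
    rw [hx₀def]; exact mul_nonneg haε0 (by linarith)
  have hx₀half : x₀ ≤ 1 / 2 := by rw [hx₀def]; exact prod_half_aux _ haε0 haε₀
  clear_value x₀
  -- bound the min term from below by 1/2
  have h2eq : Real.sqrt 4 = 2 := by
    rw [show (4:ℝ) = 2 ^ 2 by norm_num]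
    exact Real.sqrt_sq (by norm_num)
  have hfp0 : Real.sqrt (1 + x₀) ≤ 2 :=
    h2eq ▸ Real.sqrt_le_sqrt (by linarith)
  have hsq0 : 0 < Real.sqrt (1 + x₀) := Real.sqrt_pos.mpr (by linarith)
  have hinv : (1/2 : ℝ) ≤ (Real.sqrt (1 + x₀))⁻¹ := by
    have := inv_anti₀ hsq0 hfp0
    norm_num at this ⊢
    linarith
  have hx₀D : x₀ / D ≤ x₀ := div_le_self hx₀0 hD
  have hx₀D0 : 0 ≤ x₀ / D := by positivity
  have hfm0 : (1/2 : ℝ) ≤ Real.sqrt (1 - x₀ / D) := by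
    rw [Real.le_sqrt (by norm_num) (by linarith)]
    norm_num
    linarith
  have hM : (1/2 : ℝ) ≤ min (Real.sqrt (1 + x₀))⁻¹ (Real.sqrt (1 - x₀ / D)) :=
    le_min hinv hfm0
  set M : ℝ := min (Real.sqrt (1 + x₀))⁻¹ (Real.sqrt (1 - x₀ / D)) with hMdef
  -- bound the difference of square roots
  have hxD : x / D ≤ x := div_le_self hx0 hD
  have hxD0 : 0 ≤ x / D := by positivity
  have h1 : Real.sqrt (1 + x) ≤ 1 + x / 2 := sqrt_one_add_le_aux x hx0
  have h2 : 1 - x / D ≤ Real.sqrt (1 - x / D) :=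
    one_sub_le_sqrt_aux (x / D) hxD0 (by linarith)
  have hΔ : Real.sqrt (1 + x) - Real.sqrt (1 - x / D) ≤ (3/2) * x := by linarith
  set Δ : ℝ := Real.sqrt (1 + x) - Real.sqrt (1 - x / D) with hΔdef
  -- denominator comparison
  set P : ℝ := 1 + (s - s₀) ^ 2 with hPdef
  have hP0 : 0 < P := by rw [hPdef]; positivity
  have hP : P ≤ 2 * K * Q := by
    rw [hPdef, hKdef, hQdef]
    calc 1 + (s - s₀) ^ 2 ≤ 2 * (1 + s₀ ^ 2) * (1 + s ^ 2) := denom_aux s s₀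
      _ = 2 * (1 + s₀ ^ 2) * (1 + s ^ 2) := rfl
  -- final chain
  rw [sub_pos]
  rw [lt_div_iff₀ hP0]
  calc E * Δ * P ≤ E * ((3/2) * x) * (2 * K * Q) := by
        apply mul_le_mul (mul_le_mul_of_nonneg_left hΔ hE.le) hP hP0.le (by positivity)
    _ = 3 * E * K * (x * Q) := by ring
    _ ≤ 3 * E * K * (3 * (a * ε₀)) := by
        apply mul_le_mul_of_nonneg_left hxQ (by positivity)
    _ = (9/19) * (ε₀ * (19 * a * E * K)) := by ring
    _ ≤ (9/19) * c := by
        apply mul_le_mul_of_nonneg_left hεc (by norm_num)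
    _ < c * (1/2) := by linarith
    _ ≤ c * M := mul_le_mul_of_nonneg_left hM hc.le
end
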